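/- arXiv:2511.13613 — 6 statements merged into one kernel-verified Lean document; each statement's English description precedes it below -/
import Mathlib

section
/- For 0 ≤ j ≤ ℓ-1, the cyclotomic number (0, j) is odd if and only if 2 lies in the coset g^j K. -/
/-- Cyclotomic number `(i, j)` with respect to generator `g` and divisor `ℓ`. -/
noncomputable def cyc {F : Type*} [Field F] [Fintype F] (g : Fˣ) (ℓ : ℕ) (i j : ℤ) : ℕ :=
  Nat.card {x : F // (∃ y : Fˣ, x = 1 + ((g ^ i * y ^ ℓ : Fˣ) : F)) ∧
    ∃ z : Fˣ, x = ((g ^ j * z ^ ℓ : Fˣ) : F)}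

/-- A finset with a fixed-point-free involution has even cardinality. -/
lemma even_card_invol {α : Type*} [DecidableEq α] (s : Finset α) (f : α → α)
    (h1 : ∀ x ∈ s, f x ∈ s) (h2 : ∀ x ∈ s, f (f x) = x) (h3 : ∀ x ∈ s, f x ≠ x) :
    Even s.card := by
  induction s using Finset.strongInduction with
  | _ s ih =>
    rcases s.eq_empty_or_nonempty with rfl | ⟨a, ha⟩
    · simp
    · have hfa : f a ∈ s := h1 a ha
      have hne : f a ≠ a := h3 a ha
      set t := (s.erase a).erase (f a) with ht
      have hmem : ∀ x, x ∈ t ↔ x ≠ f a ∧ x ≠ a ∧ x ∈ s := by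
        intro x; simp [ht, Finset.mem_erase, and_assoc]
      have hsub : t ⊂ s := by
        refine Finset.ssubset_iff_of_subset (fun x hx => ((hmem x).1 hx).2.2) |>.2 ⟨a, ha, ?_⟩
        intro h; exact (((hmem a).1 h).2.1 rfl)
      have hcard : s.card = t.card + 2 := by
        have h1' : (s.erase a).card = s.card - 1 := Finset.card_erase_of_mem ha
        have hfa' : f a ∈ s.erase a := Finset.mem_erase.2 ⟨hne, hfa⟩
        have h2' : t.card = (s.erase a).card - 1 := Finset.card_erase_of_mem hfa'
        have hpos : 1 ≤ s.card := Finset.card_pos.2 ⟨a, ha⟩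
        have hpos2 : 1 ≤ (s.erase a).card := Finset.card_pos.2 ⟨f a, hfa'⟩
        omega
      have hteven : Even t.card := by
        refine ih t hsub (fun x hx => ?_) (fun x hx => h2 x ((hmem x).1 hx).2.2)
          (fun x hx => h3 x ((hmem x).1 hx).2.2)
        obtain ⟨hxfa, hxa, hxs⟩ := (hmem x).1 hx
        refine (hmem (f x)).2 ⟨?_, ?_, h1 x hxs⟩
        · intro h
          exact hxa (by rw [← h2 x hxs, h, h2 a ha])
        · intro h
          exact hxfa (by rw [← h2 x hxs, h])
      rw [hcard]
      exact hteven.add (by norm_num)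

/-- Lehmer's Lemma I: `(0, j)` is odd iff `2 ∈ gʲK`. -/
theorem cyc_zero_odd_iff {F : Type*} [Field F] [Fintype F] (g : Fˣ) (ℓ : ℕ)
    (hg : ∀ x : Fˣ, x ∈ Subgroup.zpowers g)
    (hodd : Odd (Fintype.card F)) (hℓ : ℓ ∣ Fintype.card F - 1)
    (j : ℕ) (hj : j ≤ ℓ - 1) :
    Odd (cyc g ℓ 0 (j : ℤ)) ↔ ∃ y : Fˣ, (2 : F) = ((g ^ (j : ℤ) * y ^ ℓ : Fˣ) : F) := by
  classical
  set P : F → Prop := fun x => (∃ y : Fˣ, x = 1 + ((g ^ (0 : ℤ) * y ^ ℓ : Fˣ) : F)) ∧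
    ∃ z : Fˣ, x = ((g ^ (j : ℤ) * z ^ ℓ : Fˣ) : F) with hPdef
  set s : Finset F := Finset.univ.filter P with hsdef
  have hcyc : cyc g ℓ 0 (j : ℤ) = s.card := by
    rw [cyc, Nat.card_eq_fintype_card]
    exact Fintype.card_subtype _
  have hmems : ∀ x, x ∈ s ↔ P x := by
    intro x; simp [hsdef]
  set f : F → F := fun x => x * (x - 1)⁻¹ with hfdef
  -- key properties of the involution away from 2
  have key : ∀ x, P x → x ≠ 2 → P (f x) ∧ f x ≠ 2 ∧ f x ≠ x ∧ f (f x) = x := by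
    intro x hPx hx2
    obtain ⟨⟨y, hy⟩, ⟨z, hz⟩⟩ := hPx
    have hx0 : x ≠ 0 := by rw [hz]; exact Units.ne_zero _
    have hy' : x - 1 = ((y : F)) ^ ℓ := by
      rw [hy]; push_cast; simp
    have hyne : ((y : F)) ≠ 0 := Units.ne_zero _
    have hx1 : x - 1 ≠ 0 := by rw [hy']; exact pow_ne_zero _ hyne
    have hfx : f x = x * (x - 1)⁻¹ := rfl
    have hP1 : ∃ y' : Fˣ, f x = 1 + ((g ^ (0 : ℤ) * y' ^ ℓ : Fˣ) : F) := by
      refine ⟨y⁻¹, ?_⟩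
      have h : ((g ^ (0 : ℤ) * y⁻¹ ^ ℓ : Fˣ) : F) = (x - 1)⁻¹ := by
        push_cast
        rw [inv_pow, ← hy']
        simp
      rw [hfx, h]
      field_simp
      ring
    have hP2 : ∃ z' : Fˣ, f x = ((g ^ (j : ℤ) * z' ^ ℓ : Fˣ) : F) := by
      refine ⟨z * y⁻¹, ?_⟩
      have h : ((g ^ (j : ℤ) * (z * y⁻¹) ^ ℓ : Fˣ) : F) = x * (x - 1)⁻¹ := by
        push_cast
        rw [mul_pow, inv_pow, ← hy', ← mul_assoc]
        congr 1
        rw [hz]; push_cast; ring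
      rw [hfx, h]
    have hne2 : f x ≠ 2 := by
      intro h
      rw [hfx] at h
      apply hx2
      field_simp at h
      linear_combination -h
    have hnex : f x ≠ x := by
      intro h
      rw [hfx] at h
      apply hx2
      field_simp at h
      linear_combination -h
    have hff : f (f x) = x := by
      have h1 : f x - 1 = (x - 1)⁻¹ := by
        rw [hfx]; field_simp; ring
      show f x * (f x - 1)⁻¹ = x
      rw [h1, inv_inv, hfx]
      field_simp
    exact ⟨⟨hP1, hP2⟩, hne2, hnex, hff⟩
  have h2iff : P 2 ↔ ∃ z : Fˣ, (2 : F) = ((g ^ (j : ℤ) * z ^ ℓ : Fˣ) : F) := by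
    constructor
    · rintro ⟨_, h⟩; exact h
    · intro h
      refine ⟨⟨1, ?_⟩, h⟩
      push_cast
      norm_num
  rw [hcyc, ← h2iff]
  by_cases h2 : P 2
  · have h2s : (2 : F) ∈ s := (hmems 2).2 h2
    have heven : Even ((s.erase 2).card) := by
      refine even_card_invol _ f ?_ ?_ ?_
      · intro x hx
        obtain ⟨hx2, hxs⟩ := Finset.mem_erase.1 hx
        obtain ⟨hP, hne2, _, _⟩ := key x ((hmems x).1 hxs) hx2
        exact Finset.mem_erase.2 ⟨hne2, (hmems _).2 hP⟩
      · intro x hx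
        obtain ⟨hx2, hxs⟩ := Finset.mem_erase.1 hx
        exact (key x ((hmems x).1 hxs) hx2).2.2.2
      · intro x hx
        obtain ⟨hx2, hxs⟩ := Finset.mem_erase.1 hx
        exact (key x ((hmems x).1 hxs) hx2).2.2.1
    have : s.card = (s.erase 2).card + 1 := (Finset.card_erase_add_one h2s).symm
    rw [this]
    exact iff_of_true heven.add_one h2
  · have heven : Even s.card := by
      refine even_card_invol _ f ?_ ?_ ?_
      · intro x hx
        have hx2 : x ≠ 2 := fun h => h2 (h ▸ (hmems x).1 hx)
        exact (hmems _).2 (key x ((hmems x).1 hx) hx2).1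
      · intro x hx
        have hx2 : x ≠ 2 := fun h => h2 (h ▸ (hmems x).1 hx)
        exact (key x ((hmems x).1 hx) hx2).2.2.2
      · intro x hx
        have hx2 : x ≠ 2 := fun h => h2 (h ▸ (hmems x).1 hx)
        exact (key x ((hmems x).1 hx) hx2).2.2.1
    exact iff_of_false (Nat.not_odd_iff_even.2 heven) h2
end

section
/- If the subgroup K of ℓ-th powers (with ℓ ≥ 2) is a difference set of the additive group of F_q, then k = |K| is odd and ℓ is even. -/
/-- The set of `ℓ`-th powers in `Fˣ`, viewed inside `F`. -/
def Kset (F : Type*) [Field F] (ℓ : ℕ) : Set F :=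
  {x : F | ∃ y : Fˣ, x = ((y ^ ℓ : Fˣ) : F)}

/-- `H` is a difference set of `(F, +)` with parameter `lam`. -/
def IsDiffSet {F : Type*} [Field F] (H : Set F) (lam : ℕ) : Prop :=
  ∀ z : F, z ≠ 0 →
    Nat.card {p : F × F // p.1 ∈ H ∧ p.2 ∈ H ∧ p.1 - p.2 = z} = lam

lemma invol_card_modEq {α : Type*} [Finite α] (f : α → α) (hf : Function.Involutive f) :
    Nat.card α ≡ Nat.card {x : α // f x = x} [MOD 2] := by
  classical
  cases nonempty_fintype α
  haveI : Fact (Nat.Prime 2) := ⟨Nat.prime_two⟩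
  have hf2 : (show Function.End α from f) ^ (2:ℕ) ^ (1:ℕ) = 1 := by
    funext x
    show f (f ((1 : Function.End α) x)) = x
    exact hf x
  have h := Equiv.Perm.card_fixedPoints_modEq hf2
  have e1 : Nat.card α = Fintype.card α := Nat.card_eq_fintype_card
  have e2 : Nat.card {x : α // f x = x} =
      Fintype.card (Function.fixedPoints (show Function.End α from f)) := by
    rw [Nat.card_eq_fintype_card]
    exact Fintype.card_congr (Equiv.subtypeEquivRight fun x => Iff.rfl)
  rw [e1, e2]
  exact h

lemma Kset_one_mem {F : Type*} [Field F] (ℓ : ℕ) : (1 : F) ∈ Kset F ℓ :=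
  ⟨1, by simp⟩

lemma Kset_mul_mem {F : Type*} [Field F] {ℓ : ℕ} {a b : F}
    (ha : a ∈ Kset F ℓ) (hb : b ∈ Kset F ℓ) : a * b ∈ Kset F ℓ := by
  obtain ⟨y, rfl⟩ := ha
  obtain ⟨z, rfl⟩ := hb
  exact ⟨y * z, by rw [mul_pow]; push_cast; ring⟩

lemma neg_one_not_mem_Kset {F : Type*} [Field F] [Fintype F] {ℓ lam : ℕ}
    (hℓ2 : 2 ≤ ℓ) (hodd : Odd (Fintype.card F)) (hℓ : ℓ ∣ Fintype.card F - 1)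
    (hds : IsDiffSet (Kset F ℓ) lam) : (-1 : F) ∉ Kset F ℓ := by
  classical
  intro hneg
  have hchar : ringChar F ≠ 2 := by
    intro h
    have := FiniteField.even_card_of_char_two h
    have := Nat.odd_iff.mp hodd
    omega
  have htwo : (2 : F) ≠ 0 := Ring.two_ne_zero hchar
  have hnegmem : ∀ {a : F}, a ∈ Kset F ℓ → -a ∈ Kset F ℓ := by
    intro a ha
    simpa [neg_one_mul] using Kset_mul_mem hneg ha
  -- general parity computation
  have parity : ∀ x₀ : F, x₀ ≠ 0 →
      (x₀ ∈ Kset F ℓ → Odd lam) ∧ (x₀ ∉ Kset F ℓ → Even lam) := by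
    intro x₀ hx0
    have hzne : (2 : F) * x₀ ≠ 0 := mul_ne_zero htwo hx0
    set T := {p : F × F // p.1 ∈ Kset F ℓ ∧ p.2 ∈ Kset F ℓ ∧ p.1 - p.2 = 2 * x₀} with hT
    have hcardT : Nat.card T = lam := hds (2 * x₀) hzne
    have fdef : ∀ p : T, (-p.1.2 ∈ Kset F ℓ ∧ -p.1.1 ∈ Kset F ℓ ∧
        -p.1.2 - -p.1.1 = 2 * x₀) := by
      intro p
      refine ⟨hnegmem p.2.2.1, hnegmem p.2.1, ?_⟩
      rw [neg_sub_neg]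
      exact p.2.2.2
    set f : T → T := fun p => ⟨(-p.1.2, -p.1.1), fdef p⟩ with hfdef
    have hf : Function.Involutive f := by
      intro p
      apply Subtype.ext
      simp [hfdef]
    have hmod := invol_card_modEq f hf
    rw [hcardT] at hmod
    have hfix : ∀ x : T, f x = x ↔ x.1.1 = x₀ ∧ x.1.2 = -x₀ := by
      intro x
      constructor
      · intro h
        have h' : (-x.1.2, -x.1.1) = x.1 := congrArg Subtype.val h
        rw [Prod.ext_iff] at h'
        have h1 : -x.1.2 = x.1.1 := h'.1
        have hsub : x.1.1 - x.1.2 = 2 * x₀ := x.2.2.2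
        have hxx : (2 : F) * x.1.1 = 2 * x₀ := by
          linear_combination hsub - h1
        have hx1 : x.1.1 = x₀ := mul_left_cancel₀ htwo hxx
        exact ⟨hx1, by linear_combination -h1 - hx1⟩
      · rintro ⟨h1, h2⟩
        apply Subtype.ext
        show (-x.1.2, -x.1.1) = (x : F × F)
        exact Prod.ext (by simp [h1, h2]) (by simp [h1, h2])
    constructor
    · intro hx₀mem
      haveI : Unique {x : T // f x = x} :=
        { default := ⟨⟨(x₀, -x₀), hx₀mem, hnegmem hx₀mem, by ring⟩,
            (hfix _).mpr ⟨rfl, rfl⟩⟩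
          uniq := by
            rintro ⟨x, hx⟩
            obtain ⟨h1, h2⟩ := (hfix x).mp hx
            apply Subtype.ext
            apply Subtype.ext
            exact Prod.ext h1 h2 }
      rw [Nat.card_unique] at hmod
      exact Nat.odd_iff.mpr (by simpa [Nat.ModEq] using hmod)
    · intro hx₀nmem
      haveI : IsEmpty {x : T // f x = x} := ⟨by
        rintro ⟨x, hx⟩
        exact hx₀nmem (((hfix x).mp hx).1 ▸ x.2.1)⟩
      rw [Nat.card_of_isEmpty] at hmod
      exact Nat.even_iff.mpr (by simpa [Nat.ModEq] using hmod)
  -- there is a unit not in Kset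
  have hex : ∃ w : Fˣ, ((w : F) ∉ Kset F ℓ) := by
    by_contra hall
    push_neg at hall
    have hsurj : Function.Surjective (fun y : Fˣ => y ^ ℓ) := by
      intro w
      obtain ⟨y, hy⟩ := hall w
      exact ⟨y, Units.ext hy.symm⟩
    have hinj : Function.Injective (fun y : Fˣ => y ^ ℓ) :=
      Finite.injective_iff_surjective.mpr hsurj
    obtain ⟨p, hp, hpl⟩ := Nat.exists_prime_and_dvd (show ℓ ≠ 1 by omega)
    haveI := Fact.mk hp
    have hpd : p ∣ Fintype.card Fˣ := by
      rw [Fintype.card_units]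
      exact hpl.trans hℓ
    obtain ⟨ζ, hζ⟩ := exists_prime_orderOf_dvd_card p hpd
    have hζℓ : ζ ^ ℓ = 1 ^ ℓ := by
      rw [one_pow]
      obtain ⟨m, rfl⟩ := hpl
      rw [pow_mul, ← hζ, pow_orderOf_eq_one, one_pow]
    have : ζ = 1 := hinj hζℓ
    rw [this, orderOf_one] at hζ
    exact hp.one_lt.ne' hζ.symm
  obtain ⟨w, hw⟩ := hex
  have hodd' : Odd lam := (parity 1 one_ne_zero).1 (Kset_one_mem ℓ)
  have heven : Even lam := (parity (w : F) (Units.ne_zero w)).2 hw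
  have h1 := Nat.odd_iff.mp hodd'
  have h2 := Nat.even_iff.mp heven
  omega

theorem diffSet_k_odd_ell_even {F : Type*} [Field F] [Fintype F] (ℓ : ℕ)
    (hℓ2 : 2 ≤ ℓ) (hodd : Odd (Fintype.card F)) (hℓ : ℓ ∣ Fintype.card F - 1)
    (k : ℕ) (hk : k = (Fintype.card F - 1) / ℓ)
    (lam : ℕ) (hlam : 0 < lam) (hds : IsDiffSet (Kset F ℓ) lam) :
    Odd k ∧ Even ℓ := by
  classical
  have hneg := neg_one_not_mem_Kset hℓ2 hodd hℓ hds
  have hq2 : 2 ≤ Fintype.card F := Fintype.one_lt_card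
  have hq3 : 3 ≤ Fintype.card F := by
    rcases hodd with ⟨m, hm⟩; omega
  have hkl : k * ℓ = Fintype.card F - 1 := by
    rw [hk]; exact Nat.div_mul_cancel hℓ
  have hkodd : Odd k := by
    rw [Nat.odd_iff]
    by_contra hke
    have hkeven : k % 2 = 0 := by omega
    obtain ⟨t, ht⟩ : ∃ t, k = 2 * t := ⟨k / 2, by omega⟩
    have hkpos : 0 < k := by
      rcases Nat.eq_zero_or_pos k with h | h
      · rw [h, zero_mul] at hkl; omega
      · exact h
    have htpos : 0 < t := by omega
    obtain ⟨g, hg⟩ := IsCyclic.exists_generator (α := Fˣ)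
    have hog : orderOf g = Fintype.card F - 1 := by
      rw [orderOf_eq_card_of_forall_mem_zpowers hg, Nat.card_units,
        Nat.card_eq_fintype_card]
    have hmq : 2 * (t * ℓ) = Fintype.card F - 1 := by
      rw [← hkl, ht]; ring
    set s := g ^ (t * ℓ) with hs
    have hs2 : s ^ 2 = 1 := by
      rw [hs, ← pow_mul, mul_comm (t * ℓ) 2, hmq, ← hog]
      exact pow_orderOf_eq_one g
    have hs1 : s ≠ 1 := by
      intro h
      have hdvd : orderOf g ∣ t * ℓ := orderOf_dvd_of_pow_eq_one h
      rw [hog] at hdvd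
      have hle := Nat.le_of_dvd (by positivity) hdvd
      have : 0 < t * ℓ := by positivity
      omega
    have hcoe : ((s : F)) ^ 2 = 1 := by
      rw [← Units.val_pow_eq_pow_val, hs2, Units.val_one]
    have hfac : ((s : F) - 1) * ((s : F) + 1) = 0 := by linear_combination hcoe
    rcases mul_eq_zero.mp hfac with h | h
    · exact hs1 (Units.ext (by rw [Units.val_one]; exact sub_eq_zero.mp h))
    · have hsneg : (s : F) = -1 := eq_neg_of_add_eq_zero_left h
      exact hneg ⟨g ^ t, by rw [← pow_mul, ← hs, ← hsneg]⟩
  refine ⟨hkodd, ?_⟩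
  have hqeven : Even (Fintype.card F - 1) := by
    rcases hodd with ⟨m, hm⟩
    exact ⟨m, by omega⟩
  rw [← hkl] at hqeven
  rcases Nat.even_mul.mp hqeven with h | h
  · have := Nat.even_iff.mp h
    have := Nat.odd_iff.mp hkodd
    omega
  · exact h
end

section
/- For integers i and v with 0 ≤ i, v ≤ ℓ-1, in the group ring Z[F_q] (with the additive group of F_q written multiplicatively) the product α_i · α_v equals δ_{i, v+q'} · 1 + Σ_{j=0}^{ℓ-1} (i-v, j-v) α_j, where α_s denotes the formal sum of the elements of the coset g^s K, δ_{s,t} = k if s ≡ t (mod ℓ) and 0 otherwise, and q' = (q-1)/2. -/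
/-- `α_s`: the formal sum, in the integral group ring of the additive group of `F`
(written multiplicatively), of the elements of the coset `gˢK`. -/
noncomputable def alpha {F : Type*} [Field F] [Fintype F] (g : Fˣ) (ℓ : ℕ) (s : ℤ) :
    MonoidAlgebra ℤ (Multiplicative F) :=
  ∑ x ∈ (Set.toFinite {x : F | ∃ y : Fˣ, x = ((g ^ s * y ^ ℓ : Fˣ) : F)}).toFinset,
    MonoidAlgebra.of ℤ (Multiplicative F) (Multiplicative.ofAdd x)

section Aux

variable {F : Type*} [Field F] [Fintype F] (g : Fˣ) (ℓ : ℕ)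

/-- The coset `gˢK` as a finset of `F`. -/
noncomputable def Sfin (s : ℤ) : Finset F :=
  (Set.toFinite {x : F | ∃ y : Fˣ, x = ((g ^ s * y ^ ℓ : Fˣ) : F)}).toFinset

lemma mem_Sfin {s : ℤ} {x : F} :
    x ∈ Sfin g ℓ s ↔ ∃ y : Fˣ, x = ((g ^ s * y ^ ℓ : Fˣ) : F) := by
  simp [Sfin]

lemma mem_Sfin_unit {s : ℤ} {u : Fˣ} :
    (u : F) ∈ Sfin g ℓ s ↔ ∃ y : Fˣ, u = g ^ s * y ^ ℓ := by
  simp [mem_Sfin, Units.ext_iff]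

lemma alpha_eq (s : ℤ) : alpha g ℓ s =
    ∑ x ∈ Sfin g ℓ s, MonoidAlgebra.of ℤ (Multiplicative F) (Multiplicative.ofAdd x) := rfl

lemma zero_not_mem_Sfin (s : ℤ) : (0 : F) ∉ Sfin g ℓ s := by
  rw [mem_Sfin]
  rintro ⟨y, hy⟩
  exact (g ^ s * y ^ ℓ).ne_zero hy.symm

lemma ne_zero_of_mem_Sfin {s : ℤ} {x : F} (hx : x ∈ Sfin g ℓ s) : x ≠ 0 := by
  rintro rfl; exact zero_not_mem_Sfin g ℓ s hx

lemma zpow_diff_eq_one {A B : ℤ} (h : g ^ A = g ^ B) : g ^ (A - B) = 1 := by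
  rw [zpow_sub, h]; exact mul_inv_cancel _

lemma zpow_eq_of_diff {A B : ℤ} (h : g ^ (A - B) = 1) : g ^ A = g ^ B := by
  rw [zpow_sub, mul_inv_eq_one] at h; exact h

lemma unit_pow_ell (m : ℤ) : (g ^ m) ^ ℓ = g ^ ((ℓ : ℤ) * m) := by
  rw [← zpow_natCast (g ^ m) ℓ, ← zpow_mul, mul_comm]

lemma unit_mul (s t : ℤ) (y z : Fˣ) :
    (g ^ s * y ^ ℓ) * (g ^ t * z ^ ℓ) = g ^ (s + t) * (y * z) ^ ℓ := by
  rw [zpow_add, mul_pow]; exact mul_mul_mul_comm _ _ _ _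

lemma unit_div (s t : ℤ) (y z : Fˣ) :
    (g ^ s * y ^ ℓ) / (g ^ t * z ^ ℓ) = g ^ (s - t) * (y / z) ^ ℓ := by
  rw [zpow_sub, div_pow]; exact mul_div_mul_comm _ _ _ _

variable (hg : ∀ x : Fˣ, x ∈ Subgroup.zpowers g)

include hg in
lemma exists_exp {s : ℤ} {u : Fˣ} :
    (∃ y : Fˣ, u = g ^ s * y ^ ℓ) ↔ ∃ m : ℤ, u = g ^ (s + (ℓ : ℤ) * m) := by
  constructor
  · rintro ⟨y, rfl⟩
    obtain ⟨m, rfl⟩ := hg y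
    exact ⟨m, by rw [unit_pow_ell, ← zpow_add]⟩
  · rintro ⟨m, rfl⟩
    exact ⟨g ^ m, by rw [unit_pow_ell, ← zpow_add]⟩

lemma order_eq : orderOf g = Fintype.card F - 1 → True := fun _ => trivial

include hg in
lemma horder : orderOf g = Fintype.card F - 1 := by
  rw [orderOf_eq_card_of_forall_mem_zpowers hg, Nat.card_units, Nat.card_eq_fintype_card]

include hg in
lemma mod_of_mem_both (hℓ : ℓ ∣ Fintype.card F - 1) {s t : ℤ} {x : F}
    (hs : x ∈ Sfin g ℓ s) (ht : x ∈ Sfin g ℓ t) : (ℓ : ℤ) ∣ s - t := by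
  rw [mem_Sfin] at hs ht
  obtain ⟨y, rfl⟩ := hs
  obtain ⟨z, hz⟩ := ht
  have hz' : (g ^ s * y ^ ℓ : Fˣ) = g ^ t * z ^ ℓ := Units.ext hz
  have h1 : ∃ m : ℤ, (g ^ s * y ^ ℓ : Fˣ) = g ^ (s + (ℓ : ℤ) * m) :=
    (exists_exp g ℓ hg).mp ⟨y, rfl⟩
  have h2 : ∃ m : ℤ, (g ^ s * y ^ ℓ : Fˣ) = g ^ (t + (ℓ : ℤ) * m) :=
    (exists_exp g ℓ hg).mp ⟨z, hz'⟩
  obtain ⟨m, hm⟩ := h1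
  obtain ⟨m', hm'⟩ := h2
  have : g ^ ((s + (ℓ : ℤ) * m) - (t + (ℓ : ℤ) * m')) = 1 := by
    rw [zpow_sub, ← hm, ← hm']
    exact mul_inv_cancel _
  rw [← orderOf_dvd_iff_zpow_eq_one, horder g hg] at this
  have hdvd : (ℓ : ℤ) ∣ (s + (ℓ : ℤ) * m) - (t + (ℓ : ℤ) * m') :=
    dvd_trans (Int.natCast_dvd_natCast.mpr hℓ) this
  have h5 : (ℓ : ℤ) ∣ (s - t) + (ℓ : ℤ) * (m - m') := by
    convert hdvd using 1; ring
  have h6 := dvd_sub h5 (dvd_mul_right (ℓ : ℤ) (m - m'))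
  simpa using h6

include hg in
lemma Sfin_congr {s t : ℤ} (h : (ℓ : ℤ) ∣ s - t) : Sfin g ℓ s = Sfin g ℓ t := by
  obtain ⟨c, hc⟩ := h
  ext x
  rw [mem_Sfin, mem_Sfin]
  have hst : s = t + (ℓ : ℤ) * c := by linarith
  constructor
  · rintro ⟨y, rfl⟩
    exact ⟨g ^ c * y, by rw [mul_pow, unit_pow_ell, ← mul_assoc, ← zpow_add, ← hst]⟩
  · rintro ⟨y, rfl⟩
    exact ⟨g ^ (-c) * y, by rw [mul_pow, unit_pow_ell, ← mul_assoc, ← zpow_add, hst]; ring_nf⟩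

include hg in
lemma Sfin_card (hℓ : ℓ ∣ Fintype.card F - 1) (s : ℤ) :
    (Sfin g ℓ s).card = (Fintype.card F - 1) / ℓ := by
  classical
  set n := Fintype.card F - 1 with hn
  have hnpos : 0 < n := by
    have := Fintype.one_lt_card (α := F)
    omega
  have hℓpos : 0 < ℓ := Nat.pos_of_dvd_of_pos hℓ hnpos
  set k := n / ℓ with hk
  have hkl : ℓ * k = n := Nat.mul_div_cancel' hℓ
  have hkpos : 0 < k := Nat.div_pos (Nat.le_of_dvd hnpos hℓ) hℓpos
  have hgn : g ^ (n : ℤ) = 1 := by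
    rw [zpow_natCast, hn, ← horder g hg, pow_orderOf_eq_one]
  have himg : Sfin g ℓ s =
      (Finset.range k).image (fun m : ℕ => ((g ^ (s + (ℓ : ℤ) * m) : Fˣ) : F)) := by
    ext x
    rw [mem_Sfin, Finset.mem_image]
    constructor
    · rintro ⟨y, rfl⟩
      obtain ⟨m, hm⟩ := (exists_exp g ℓ hg).mp ⟨y, rfl⟩
      refine ⟨(m % k).toNat, ?_, ?_⟩
      · rw [Finset.mem_range]
        have h1 : 0 ≤ m % (k : ℤ) := Int.emod_nonneg m (by positivity)
        have h2 : m % (k : ℤ) < k := Int.emod_lt_of_pos m (by positivity)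
        omega
      · have htn : ((m % (k : ℤ)).toNat : ℤ) = m % k := Int.toNat_of_nonneg
          (Int.emod_nonneg m (by positivity))
        rw [hm]
        congr 1
        rw [htn]
        apply zpow_eq_of_diff
        have heq : (s + (ℓ : ℤ) * (m % (k : ℤ))) - (s + (ℓ : ℤ) * m)
            = (n : ℤ) * (-(m / (k : ℤ))) := by
          rw [Int.emod_def]
          push_cast [← hkl]
          ring
        rw [heq, zpow_mul, hgn, one_zpow]
    · rintro ⟨m, _, rfl⟩
      exact ⟨g ^ (m : ℤ), by rw [unit_pow_ell, ← zpow_add]⟩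
  rw [himg, Finset.card_image_of_injOn, Finset.card_range]
  intro m₁ h₁ m₂ h₂ heq
  rw [Finset.mem_coe, Finset.mem_range] at h₁ h₂
  have heq' : (g ^ (s + (ℓ : ℤ) * m₁) : Fˣ) = g ^ (s + (ℓ : ℤ) * m₂) := Units.ext heq
  have h1 : g ^ ((s + (ℓ : ℤ) * m₁) - (s + (ℓ : ℤ) * m₂)) = 1 := zpow_diff_eq_one g heq'
  rw [← orderOf_dvd_iff_zpow_eq_one, horder g hg, ← hn] at h1
  have h2 : ((ℓ : ℤ) * k) ∣ (ℓ : ℤ) * ((m₁ : ℤ) - m₂) := by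
    have hcast : ((n : ℕ) : ℤ) = (ℓ : ℤ) * (k : ℤ) := by push_cast [← hkl]; ring
    have hexp : (s + (ℓ : ℤ) * m₁) - (s + (ℓ : ℤ) * m₂) = (ℓ : ℤ) * ((m₁ : ℤ) - m₂) := by ring
    rw [← hcast, ← hexp]
    exact h1
  have h3 : (k : ℤ) ∣ (m₁ : ℤ) - m₂ :=
    (mul_dvd_mul_iff_left (by positivity : (ℓ : ℤ) ≠ 0)).mp h2
  have h4 : (m₁ : ℤ) - m₂ = 0 := Int.eq_zero_of_abs_lt_dvd h3 (by
    rw [abs_lt]; constructor <;> [linarith [h₂] ; omega])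
  omega

include hg in
lemma exists_coset (hℓ : ℓ ∣ Fintype.card F - 1) {x : F} (hx : x ≠ 0) :
    ∃ j : ℕ, j < ℓ ∧ x ∈ Sfin g ℓ (j : ℤ) := by
  have hnpos : 0 < Fintype.card F - 1 := by
    have := Fintype.one_lt_card (α := F); omega
  have hℓpos : 0 < ℓ := Nat.pos_of_dvd_of_pos hℓ hnpos
  obtain ⟨u, hu⟩ : ∃ u : Fˣ, (u : F) = x := ⟨Units.mk0 x hx, rfl⟩
  obtain ⟨m, hm⟩ := hg u
  refine ⟨(m % (ℓ : ℤ)).toNat, ?_, ?_⟩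
  · have h2 : m % (ℓ : ℤ) < ℓ := Int.emod_lt_of_pos m (by positivity)
    omega
  · have h1 : 0 ≤ m % (ℓ : ℤ) := Int.emod_nonneg m (by positivity)
    have htn : (((m % (ℓ : ℤ)).toNat : ℕ) : ℤ) = m % (ℓ : ℤ) := Int.toNat_of_nonneg h1
    rw [← hu, mem_Sfin_unit]
    refine ⟨g ^ (m / (ℓ : ℤ)), ?_⟩
    rw [unit_pow_ell, ← zpow_add, ← hm, htn]
    congr 1
    rw [Int.emod_def]
    ring

include hg in
lemma neg_one_mem (hodd : Odd (Fintype.card F)) {q' : ℤ}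
    (hq' : q' = ((Fintype.card F - 1) / 2 : ℕ)) : (-1 : Fˣ) = g ^ q' := by
  set n := Fintype.card F - 1 with hn
  have hnpos : 2 ≤ Fintype.card F := Fintype.one_lt_card
  have hcard : Fintype.card F = n + 1 := by omega
  obtain ⟨c, hc⟩ := hodd
  have hneven : n = 2 * (n / 2) := by omega
  have hq : q' = ((n / 2 : ℕ) : ℤ) := hq'
  have hq'pos : 0 < n / 2 := by omega
  have hsq : (g ^ q') * (g ^ q') = 1 := by
    rw [← zpow_add, hq]
    have h9 : ((n / 2 : ℕ) : ℤ) + ((n / 2 : ℕ) : ℤ) = (n : ℤ) := by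
      push_cast; omega
    rw [h9, zpow_natCast, hn, ← horder g hg, pow_orderOf_eq_one]
  have hne : g ^ q' ≠ 1 := by
    intro h
    rw [← orderOf_dvd_iff_zpow_eq_one, horder g hg, ← hn, hq, Int.natCast_dvd_natCast] at h
    have := Nat.le_of_dvd hq'pos h
    omega
  have hval : ((g ^ q' : Fˣ) : F) * ((g ^ q' : Fˣ) : F) = 1 := by
    rw [← Units.val_mul, hsq, Units.val_one]
  rcases mul_self_eq_one_iff.mp hval with h | h
  · exact absurd (Units.ext h) hne
  · exact (Units.ext (by rw [h, Units.val_neg, Units.val_one])).symm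


lemma alpha_apply [DecidableEq F] (s : ℤ) (t : Multiplicative F) :
    (alpha g ℓ s).coeff t = if Multiplicative.toAdd t ∈ Sfin g ℓ s then 1 else 0 := by
  classical
  rw [alpha_eq, MonoidAlgebra.coeff_sum, Finsupp.finset_sum_apply]
  simp only [MonoidAlgebra.of_apply, MonoidAlgebra.coeff_single, Finsupp.single_apply]
  have hiff : ∀ x : F, (Multiplicative.ofAdd x = t) ↔ (x = Multiplicative.toAdd t) :=
    fun x => ⟨fun h => by rw [← h]; rfl, fun h => by rw [h]; rfl⟩
  rw [Finset.sum_congr rfl (fun x _ => if_congr (hiff x) rfl rfl)]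
  exact Finset.sum_ite_eq' (Sfin g ℓ s) (Multiplicative.toAdd t) (fun _ => (1 : ℤ))

lemma cyc_eq_card (I J : ℤ) :
    cyc g ℓ I J = ((Set.toFinite {x : F | (∃ y : Fˣ, x = 1 + ((g ^ I * y ^ ℓ : Fˣ) : F)) ∧
      ∃ z : Fˣ, x = ((g ^ J * z ^ ℓ : Fˣ) : F)}).toFinset).card := by
  have hrfl : Nat.card {x : F // (∃ y : Fˣ, x = 1 + ((g ^ I * y ^ ℓ : Fˣ) : F)) ∧
      ∃ z : Fˣ, x = ((g ^ J * z ^ ℓ : Fˣ) : F)} = Nat.card ↥{x : F | (∃ y : Fˣ,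
      x = 1 + ((g ^ I * y ^ ℓ : Fˣ) : F)) ∧ ∃ z : Fˣ, x = ((g ^ J * z ^ ℓ : Fˣ) : F)} := rfl
  rw [cyc, hrfl, Nat.card_coe_set_eq, Set.ncard_eq_toFinset_card]

include hg in
lemma zero_fiber_card [DecidableEq F] (hodd : Odd (Fintype.card F))
    (hℓ : ℓ ∣ Fintype.card F - 1)
    {q' : ℤ} (hq' : q' = ((Fintype.card F - 1) / 2 : ℕ)) (i v : ℤ) :
    (((Sfin g ℓ i) ×ˢ (Sfin g ℓ v)).filter fun p => p.1 + p.2 = 0).card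
      = if (i - (v + q')) % (ℓ : ℤ) = 0 then (Fintype.card F - 1) / ℓ else 0 := by
  have hneg : ∀ {x : F} {s : ℤ}, x ∈ Sfin g ℓ s → -x ∈ Sfin g ℓ (q' + s) := by
    intro x s hx
    rw [mem_Sfin] at hx ⊢
    obtain ⟨y, rfl⟩ := hx
    refine ⟨y, ?_⟩
    rw [← Units.val_neg]
    congr 1
    rw [← neg_one_mul, neg_one_mem g hg hodd hq', zpow_add, mul_assoc]
  by_cases hcond : (i - (v + q')) % (ℓ : ℤ) = 0
  · rw [if_pos hcond]
    have hdvd : (ℓ : ℤ) ∣ i - (q' + v) := by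
      have h0 := Int.dvd_of_emod_eq_zero hcond
      have : i - (q' + v) = i - (v + q') := by ring
      rw [this]; exact h0
    rw [← Sfin_card g ℓ hg hℓ v]
    apply Finset.card_bij (fun (p : F × F) _ => p.2)
    · intro p hp
      rw [Finset.mem_filter, Finset.mem_product] at hp
      exact hp.1.2
    · intro p hp p' hp' heq
      rw [Finset.mem_filter] at hp hp'
      have h1 : p.1 = -p.2 := eq_neg_of_add_eq_zero_left hp.2
      have h2 : p'.1 = -p'.2 := eq_neg_of_add_eq_zero_left hp'.2
      have : p.1 = p'.1 := by rw [h1, h2, heq]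
      exact Prod.ext this heq
    · intro b hb
      refine ⟨(-b, b), ?_, rfl⟩
      rw [Finset.mem_filter, Finset.mem_product]
      refine ⟨⟨?_, hb⟩, by ring⟩
      rw [Sfin_congr g ℓ hg hdvd]
      exact hneg hb
  · rw [if_neg hcond, Finset.card_eq_zero, Finset.filter_eq_empty_iff]
    intro p hp hsum
    rw [Finset.mem_product] at hp
    have h1 : p.1 = -p.2 := eq_neg_of_add_eq_zero_left hsum
    have h2 : -p.2 ∈ Sfin g ℓ (q' + v) := hneg hp.2
    rw [← h1] at h2
    have h3 : (ℓ : ℤ) ∣ i - (q' + v) := mod_of_mem_both g ℓ hg hℓ hp.1 h2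
    apply hcond
    apply Int.emod_eq_zero_of_dvd
    have : i - (v + q') = i - (q' + v) := by ring
    rw [this]; exact h3

include hg in
lemma fiber_card_eq_cyc [DecidableEq F] (i v j : ℤ) {c : F} (hc : c ∈ Sfin g ℓ j) :
    (((Sfin g ℓ i) ×ˢ (Sfin g ℓ v)).filter fun p => p.1 + p.2 = c).card
      = cyc g ℓ (i - v) (j - v) := by
  rw [cyc_eq_card]
  have hc0 : c ≠ 0 := ne_zero_of_mem_Sfin g ℓ hc
  obtain ⟨w, hw⟩ := (mem_Sfin g ℓ).mp hc
  apply Finset.card_bij (fun (p : F × F) _ => c / p.2)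
  · intro p hp
    rw [Set.Finite.mem_toFinset]
    rw [Finset.mem_filter, Finset.mem_product] at hp
    obtain ⟨⟨hp1, hp2⟩, hsum⟩ := hp
    have hb0 : p.2 ≠ 0 := ne_zero_of_mem_Sfin g ℓ hp2
    obtain ⟨y, hy⟩ := (mem_Sfin g ℓ).mp hp1
    obtain ⟨z, hz⟩ := (mem_Sfin g ℓ).mp hp2
    constructor
    · refine ⟨y / z, ?_⟩
      rw [← hsum, add_div, div_self hb0, hy, hz, ← Units.val_div_eq_div_val, unit_div,
        add_comm]
    · refine ⟨w / z, ?_⟩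
      rw [hw, hz, ← Units.val_div_eq_div_val, unit_div]
  · intro p hp p' hp' heq
    rw [Finset.mem_filter, Finset.mem_product] at hp hp'
    have hb0 : p.2 ≠ 0 := ne_zero_of_mem_Sfin g ℓ hp.1.2
    have hb0' : p'.2 ≠ 0 := ne_zero_of_mem_Sfin g ℓ hp'.1.2
    have h2 : p.2 = p'.2 := by
      calc p.2 = c / (c / p.2) := (div_div_cancel₀ hc0).symm
        _ = c / (c / p'.2) := by rw [heq]
        _ = p'.2 := div_div_cancel₀ hc0
    have h1 : p.1 = p'.1 := by
      have e1 := hp.2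
      have e2 := hp'.2
      rw [h2] at e1
      rw [eq_sub_of_add_eq e1, eq_sub_of_add_eq e2]
    exact Prod.ext h1 h2
  · intro x hx
    rw [Set.Finite.mem_toFinset] at hx
    obtain ⟨⟨y, hxy⟩, z, hxz⟩ := hx
    have hx0 : x ≠ 0 := by rw [hxz]; exact Units.ne_zero _
    have hcx : c / x = ((g ^ v * (w / z) ^ ℓ : Fˣ) : F) := by
      rw [hw, hxz, ← Units.val_div_eq_div_val, unit_div,
        show j - (j - v) = v by ring]
    refine ⟨(c - c / x, c / x), ?_, ?_⟩
    · rw [Finset.mem_filter, Finset.mem_product]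
      refine ⟨⟨?_, ?_⟩, by ring⟩
      · have hcc : c - c / x = (c / x) * (x - 1) := by
          field_simp
        rw [hcc, hcx, show x - 1 = ((g ^ (i - v) * y ^ ℓ : Fˣ) : F) by
          rw [hxy]; ring]
        rw [mem_Sfin]
        refine ⟨(w / z) * y, ?_⟩
        rw [← Units.val_mul, unit_mul, show v + (i - v) = i by ring]
      · rw [mem_Sfin]
        exact ⟨w / z, hcx⟩
    · field_simp

end Aux

theorem alpha_mul_alpha {F : Type*} [Field F] [Fintype F] (g : Fˣ) (ℓ : ℕ)
    (hg : ∀ x : Fˣ, x ∈ Subgroup.zpowers g)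
    (hodd : Odd (Fintype.card F)) (hℓ : ℓ ∣ Fintype.card F - 1)
    (k : ℕ) (hk : k = (Fintype.card F - 1) / ℓ)
    (q' : ℤ) (hq' : q' = ((Fintype.card F - 1) / 2 : ℕ))
    (i v : ℤ) (hi : 0 ≤ i) (hi' : i ≤ (ℓ : ℤ) - 1) (hv : 0 ≤ v) (hv' : v ≤ (ℓ : ℤ) - 1) :
    alpha g ℓ i * alpha g ℓ v =
      (if (i - (v + q')) % (ℓ : ℤ) = 0 then (k : ℤ) else 0) • 1 +
      ∑ j ∈ Finset.range ℓ, (cyc g ℓ (i - v) ((j : ℤ) - v) : ℤ) • alpha g ℓ (j : ℤ) := by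
  classical
  have hnpos : 0 < Fintype.card F - 1 := by
    have := Fintype.one_lt_card (α := F); omega
  have hℓpos : 0 < ℓ := Nat.pos_of_dvd_of_pos hℓ hnpos
  have hprod : alpha g ℓ i * alpha g ℓ v
      = ∑ p ∈ (Sfin g ℓ i) ×ˢ (Sfin g ℓ v),
          MonoidAlgebra.single (Multiplicative.ofAdd (p.1 + p.2)) (1 : ℤ) := by
    rw [alpha_eq, alpha_eq, Finset.sum_mul_sum, ← Finset.sum_product']
    refine Finset.sum_congr rfl fun p _ => ?_
    rw [MonoidAlgebra.of_apply, MonoidAlgebra.of_apply, MonoidAlgebra.single_mul_single,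
      one_mul, ← ofAdd_add]
  refine MonoidAlgebra.ext (Finsupp.ext fun t => ?_)
  rw [hprod, MonoidAlgebra.coeff_sum, Finsupp.finset_sum_apply]
  simp only [MonoidAlgebra.coeff_single, Finsupp.single_apply]
  have hiff : ∀ p : F × F, (Multiplicative.ofAdd (p.1 + p.2) = t)
      ↔ (p.1 + p.2 = Multiplicative.toAdd t) :=
    fun p => ⟨fun h => by rw [← h]; rfl, fun h => by rw [h]; rfl⟩
  rw [Finset.sum_congr rfl fun p _ => if_congr (hiff p) rfl rfl, Finset.sum_boole]
  rw [MonoidAlgebra.coeff_add, Finsupp.add_apply, MonoidAlgebra.coeff_smul, Finsupp.smul_apply,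
    MonoidAlgebra.coeff_sum, Finsupp.finset_sum_apply]
  have hterm : ∀ j : ℕ, ((cyc g ℓ (i - v) ((j : ℤ) - v) : ℤ) • alpha g ℓ (j : ℤ)).coeff t
      = (cyc g ℓ (i - v) ((j : ℤ) - v) : ℤ)
        * (if Multiplicative.toAdd t ∈ Sfin g ℓ (j : ℤ) then (1 : ℤ) else 0) := by
    intro j
    rw [MonoidAlgebra.coeff_smul, Finsupp.coe_smul, Pi.smul_apply, smul_eq_mul, alpha_apply g ℓ]
  rw [Finset.sum_congr rfl fun j _ => hterm j]
  rw [MonoidAlgebra.one_def, MonoidAlgebra.coeff_single, Finsupp.single_apply, smul_eq_mul]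
  by_cases ht : Multiplicative.toAdd t = 0
  · have ht1 : (1 : Multiplicative F) = t := by
      have := congrArg Multiplicative.ofAdd ht
      rw [ofAdd_toAdd] at this
      rw [this]; rfl
    rw [if_pos ht1, mul_one]
    have hz : ∀ j ∈ Finset.range ℓ, ((cyc g ℓ (i - v) ((j : ℤ) - v) : ℤ))
        * (if Multiplicative.toAdd t ∈ Sfin g ℓ (j : ℤ) then (1 : ℤ) else 0) = 0 := by
      intro j _
      rw [ht, if_neg (zero_not_mem_Sfin g ℓ _), mul_zero]
    rw [Finset.sum_congr rfl hz, Finset.sum_const_zero, add_zero, ht,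
      zero_fiber_card g ℓ hg hodd hℓ hq' i v, hk]
    split_ifs <;> simp
  · have ht1 : ¬((1 : Multiplicative F) = t) := fun h => ht (by rw [← h]; rfl)
    rw [if_neg ht1, mul_zero, zero_add]
    obtain ⟨j₀, hj₀lt, hj₀mem⟩ := exists_coset g ℓ hg hℓ ht
    have hside : ∀ j ∈ Finset.range ℓ, j ≠ j₀ → ((cyc g ℓ (i - v) ((j : ℤ) - v) : ℤ))
        * (if Multiplicative.toAdd t ∈ Sfin g ℓ (j : ℤ) then (1 : ℤ) else 0) = 0 := by
      intro j hj hne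
      by_cases hmem : Multiplicative.toAdd t ∈ Sfin g ℓ (j : ℤ)
      · exfalso
        have hdvd := mod_of_mem_both g ℓ hg hℓ hmem hj₀mem
        have hjlt := Finset.mem_range.mp hj
        have hz : ((j : ℤ) - (j₀ : ℤ)) = 0 := Int.eq_zero_of_abs_lt_dvd hdvd (by
          rw [abs_lt]; constructor <;> [omega ; omega])
        exact hne (by omega)
      · rw [if_neg hmem, mul_zero]
    rw [Finset.sum_eq_single_of_mem j₀ (Finset.mem_range.mpr hj₀lt) hside,
      if_pos hj₀mem, mul_one, fiber_card_eq_cyc g ℓ hg i v (j₀ : ℤ) hj₀mem]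
end

section
/- Let A be the ℓ×ℓ cyclotomic matrix with entries A_{ij} = (i, j). Then the difference A^T A - A A^T equals k·(E_{q',q'} - E_{0,0}), where E_{s,t} is the matrix with a 1 in position (s,t) and zeros elsewhere, q' is the residue of (q-1)/2 modulo ℓ, and k = (q-1)/ℓ. In particular A is a normal matrix if and only if k is even. -/
open Matrix

/-- The cyclotomic matrix `A = [(i,j)]`, with integer entries. -/
noncomputable def cycMatrix {F : Type*} [Field F] [Fintype F] (g : Fˣ) (ℓ : ℕ) :
    Matrix (Fin ℓ) (Fin ℓ) ℤ :=
  Matrix.of fun i j => (cyc g ℓ ((i : ℕ) : ℤ) ((j : ℕ) : ℤ) : ℤ)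

set_option linter.unusedSectionVars false

section CycAuxSection

open Finset

namespace CycAux

variable {F : Type*} [Field F] [Fintype F] [DecidableEq F] {g : Fˣ}

/-- A discrete logarithm of `w` base `g`. -/
noncomputable def dl (hg : ∀ x : Fˣ, x ∈ Subgroup.zpowers g) (w : Fˣ) : ℤ :=
  (Subgroup.mem_zpowers_iff.mp (hg w)).choose

lemma dl_spec (hg : ∀ x : Fˣ, x ∈ Subgroup.zpowers g) (w : Fˣ) : g ^ dl hg w = w :=
  (Subgroup.mem_zpowers_iff.mp (hg w)).choose_spec

/-- Discrete log modulo ℓ. -/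
noncomputable def chi (ℓ : ℕ) (hg : ∀ x : Fˣ, x ∈ Subgroup.zpowers g) (w : Fˣ) : ZMod ℓ :=
  ((dl hg w : ℤ) : ZMod ℓ)

variable {ℓ : ℕ} [NeZero ℓ]

section basic

variable (hg : ∀ x : Fˣ, x ∈ Subgroup.zpowers g) (hℓ : ℓ ∣ Fintype.card F - 1)

include hg in
lemma order_g : orderOf g = Fintype.card F - 1 := by
  rw [orderOf_eq_card_of_forall_mem_zpowers hg, Nat.card_units, Nat.card_eq_fintype_card]

include hg hℓ in
lemma exp_congr {a b : ℤ} (h : g ^ a = g ^ b) : (a : ZMod ℓ) = (b : ZMod ℓ) := by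
  have h1 : g ^ (a - b) = 1 := by
    rw [_root_.zpow_sub, h]
    exact mul_inv_cancel _
  have h2 : ((Fintype.card F - 1 : ℕ) : ℤ) ∣ a - b := by
    rw [← order_g hg]
    exact orderOf_dvd_iff_zpow_eq_one.mpr h1
  have h3 : (ℓ : ℤ) ∣ a - b := dvd_trans (Int.natCast_dvd_natCast.mpr hℓ) h2
  rw [ZMod.intCast_eq_intCast_iff]
  exact Int.modEq_iff_dvd.mpr (dvd_sub_comm.mp h3)

include hg hℓ in
lemma chi_eq_of_eq_zpow {w : Fˣ} {a : ℤ} (h : w = g ^ a) : chi ℓ hg w = (a : ZMod ℓ) :=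
  exp_congr hg hℓ (by rw [dl_spec hg w, ← h])

include hg hℓ in
lemma chi_mul (u v : Fˣ) : chi ℓ hg (u * v) = chi ℓ hg u + chi ℓ hg v := by
  have h : u * v = g ^ (dl hg u + dl hg v) := by rw [_root_.zpow_add, dl_spec, dl_spec]
  rw [chi_eq_of_eq_zpow hg hℓ h, Int.cast_add]; rfl

include hg hℓ in
lemma chi_one : chi ℓ hg 1 = 0 := by
  have h : (1 : Fˣ) = g ^ (0 : ℤ) := by rw [_root_.zpow_zero]
  rw [chi_eq_of_eq_zpow hg hℓ h, Int.cast_zero]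

include hg hℓ in
lemma chi_inv (u : Fˣ) : chi ℓ hg u⁻¹ = - chi ℓ hg u := by
  have h := chi_mul hg hℓ u u⁻¹
  rw [mul_inv_cancel, chi_one hg hℓ] at h
  exact eq_neg_of_add_eq_zero_right h.symm

include hg hℓ in
lemma chi_pow_nat (n : ℕ) : chi ℓ hg (g ^ n) = (n : ZMod ℓ) := by
  have h : g ^ n = g ^ (n : ℤ) := (_root_.zpow_natCast g n).symm
  rw [chi_eq_of_eq_zpow hg hℓ h, Int.cast_natCast]

include hg hℓ in
/-- membership in the coset `g^i K`. -/
lemma mem_iff (w : Fˣ) (i : ℤ) :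
    (∃ y : Fˣ, w = g ^ i * y ^ ℓ) ↔ chi ℓ hg w = (i : ZMod ℓ) := by
  constructor
  · rintro ⟨y, rfl⟩
    have h : g ^ i * y ^ ℓ = g ^ (i + ℓ * dl hg y) := by
      conv_lhs => rw [← dl_spec hg y]
      rw [← _root_.zpow_natCast (g ^ dl hg y) ℓ, ← _root_.zpow_mul, ← _root_.zpow_add, mul_comm (dl hg y)]
    rw [chi_eq_of_eq_zpow hg hℓ h]
    push_cast
    simp
  · intro h
    have hd : (ℓ : ℤ) ∣ dl hg w - i := by
      have h2 := (ZMod.intCast_eq_intCast_iff _ _ _).mp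
        (show ((dl hg w : ℤ) : ZMod ℓ) = (i : ZMod ℓ) from h)
      simpa using (Int.modEq_iff_dvd.mp h2.symm)
    obtain ⟨t, ht⟩ := hd
    refine ⟨g ^ t, ?_⟩
    have hw : w = g ^ (i + ℓ * t) := by
      have : i + (ℓ : ℤ) * t = dl hg w := by omega
      rw [this, dl_spec]
    rw [hw, ← _root_.zpow_natCast (g ^ t) ℓ, ← _root_.zpow_mul, ← _root_.zpow_add, mul_comm t (ℓ : ℤ)]

include hg hℓ in
lemma chi_neg_one (hodd : Odd (Fintype.card F)) :
    chi ℓ hg (-1) = (((Fintype.card F - 1) / 2 : ℕ) : ZMod ℓ) := by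
  set q := Fintype.card F with hq
  have hq3 : 3 ≤ q := by
    have h2 : 2 ≤ q := Fintype.one_lt_card
    rcases hodd with ⟨r, hr⟩
    omega
  set m := (q - 1) / 2 with hm
  have hm2 : 2 * m = q - 1 := by
    rcases hodd with ⟨r, hr⟩
    omega
  have hg1 : g ^ (q - 1) = 1 := by
    rw [← order_g hg]; exact pow_orderOf_eq_one g
  have hsq : ((g ^ m : Fˣ) : F) * ((g ^ m : Fˣ) : F) = 1 := by
    have : g ^ m * g ^ m = 1 := by
      rw [← pow_add]
      have : m + m = q - 1 := by omega
      rw [this, hg1]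
    calc ((g ^ m : Fˣ) : F) * ((g ^ m : Fˣ) : F) = ((g ^ m * g ^ m : Fˣ) : F) := by
          rw [Units.val_mul]
      _ = 1 := by rw [this, Units.val_one]
  have hne : g ^ m ≠ 1 := by
    intro hcon
    have := orderOf_dvd_iff_pow_eq_one.mpr hcon
    rw [order_g hg] at this
    have hmlt : m < q - 1 := by omega
    have hmpos : 0 < m := by omega
    exact absurd (Nat.le_of_dvd hmpos this) (by omega)
  have : g ^ m = -1 := by
    rcases mul_self_eq_one_iff.mp hsq with h1 | h1
    · exact absurd (Units.ext h1) hne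
    · apply Units.ext
      rw [h1, Units.val_neg, Units.val_one]
  rw [← this, chi_pow_nat hg hℓ]

include hg hℓ in
lemma card_fiber (c : ZMod ℓ) :
    (univ.filter fun w : Fˣ => chi ℓ hg w = c).card = (Fintype.card F - 1) / ℓ := by
  classical
  have key : ∀ c : ZMod ℓ, (univ.filter fun w : Fˣ => chi ℓ hg w = c).card
      = (univ.filter fun w : Fˣ => chi ℓ hg w = 0).card := by
    intro c
    apply Finset.card_nbij' (fun w => (g ^ c.val)⁻¹ * w) (fun w => g ^ c.val * w)
    · intro a ha
      simp only [Finset.mem_coe, mem_filter, mem_univ, true_and] at ha ⊢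
      rw [chi_mul hg hℓ, chi_inv hg hℓ, chi_pow_nat hg hℓ, ha, ZMod.natCast_rightInverse c]
      ring
    · intro a ha
      simp only [Finset.mem_coe, mem_filter, mem_univ, true_and] at ha ⊢
      rw [chi_mul hg hℓ, chi_pow_nat hg hℓ, ha, ZMod.natCast_rightInverse c]
      ring
    · intro a _; group
    · intro a _; group
  have htot : Fintype.card F - 1 = ℓ * (univ.filter fun w : Fˣ => chi ℓ hg w = 0).card := by
    have h1 : (univ : Finset Fˣ).card = ∑ c : ZMod ℓ, (univ.filter fun w : Fˣ => chi ℓ hg w = c).card :=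
      Finset.card_eq_sum_card_fiberwise (fun x _ => mem_univ _)
    have h2 : (univ : Finset Fˣ).card = Fintype.card F - 1 := by
      rw [Finset.card_univ, ← Nat.card_eq_fintype_card, Nat.card_units, Nat.card_eq_fintype_card]
    rw [← h2, h1]
    rw [Finset.sum_congr rfl (fun c _ => key c), Finset.sum_const, Finset.card_univ, ZMod.card]
    simp [mul_comm]
  rw [key c, htot, Nat.mul_div_cancel_left _ (Nat.pos_of_ne_zero (NeZero.ne ℓ))]

/-- The finset of pairs `(u, w)` with `w = 1 + u`, `u ∈ g^i K`, `w ∈ g^j K`. -/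
noncomputable def PP (ℓ : ℕ) (hg : ∀ x : Fˣ, x ∈ Subgroup.zpowers g) (i j : ZMod ℓ) : Finset (Fˣ × Fˣ) :=
  univ.filter fun p => chi ℓ hg p.1 = i ∧ chi ℓ hg p.2 = j ∧ ((p.2 : F) = 1 + (p.1 : F))

include hg hℓ in
lemma cyc_eq (i j : ℤ) :
    cyc g ℓ i j = (PP ℓ hg ((i : ZMod ℓ)) ((j : ZMod ℓ))).card := by
  rw [cyc, ← Nat.card_eq_finsetCard]
  refine (Nat.card_congr (Equiv.ofBijective
    (fun p : {p : Fˣ × Fˣ // p ∈ PP ℓ hg (i : ZMod ℓ) (j : ZMod ℓ)} =>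
      (⟨((p.1.2 : Fˣ) : F), by
        obtain ⟨⟨u, w⟩, hp⟩ := p
        simp only [PP, mem_filter, mem_univ, true_and] at hp
        obtain ⟨h1, h2, h3⟩ := hp
        constructor
        · obtain ⟨y, hy⟩ := (mem_iff hg hℓ u i).mpr h1
          exact ⟨y, by show (w : F) = _; rw [h3, hy]⟩
        · obtain ⟨z, hz⟩ := (mem_iff hg hℓ w j).mpr h2
          exact ⟨z, by show (w : F) = _; rw [hz]⟩⟩ :
        {x : F // (∃ y : Fˣ, x = 1 + ((g ^ i * y ^ ℓ : Fˣ) : F)) ∧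
          ∃ z : Fˣ, x = ((g ^ j * z ^ ℓ : Fˣ) : F)})) ?_)).symm
  constructor
  · rintro ⟨⟨u, w⟩, hp⟩ ⟨⟨u', w'⟩, hp'⟩ h
    simp only [Subtype.mk.injEq] at h
    simp only [PP, mem_filter, mem_univ, true_and] at hp hp'
    have hw : w = w' := Units.ext h
    have hu : u = u' := by
      apply Units.ext
      have h2 := hp'.2.2
      rw [← hw, hp.2.2] at h2
      exact add_left_cancel h2
    simp [hu, hw]
  · rintro ⟨x, ⟨⟨y, hy⟩, ⟨z, hz⟩⟩⟩
    refine ⟨⟨⟨g ^ i * y ^ ℓ, g ^ j * z ^ ℓ⟩, ?_⟩, ?_⟩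
    · simp only [PP, mem_filter, mem_univ, true_and]
      refine ⟨(mem_iff hg hℓ _ i).mp ⟨y, rfl⟩, (mem_iff hg hℓ _ j).mp ⟨z, rfl⟩, ?_⟩
      rw [← hz, hy]
    · simp [← hz]

/-- Solutions of `a = 1 - t + t*b` (i.e. `a - 1 = t (b - 1)`). -/
noncomputable def XS (ℓ : ℕ) (hg : ∀ x : Fˣ, x ∈ Subgroup.zpowers g) (i j : ZMod ℓ) :
    Finset (Fˣ × Fˣ × Fˣ) :=
  univ.filter fun p => chi ℓ hg p.1 = i ∧ chi ℓ hg p.2.1 = j ∧ chi ℓ hg p.2.2 = 0 ∧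
    ((p.1 : F) = 1 - (p.2.2 : F) + (p.2.2 : F) * (p.2.1 : F))

/-- Solutions of `a = s*(1+b) - 1` (i.e. `1 + a = s (1 + b)`). -/
noncomputable def YS (ℓ : ℕ) (hg : ∀ x : Fˣ, x ∈ Subgroup.zpowers g) (i j : ZMod ℓ) :
    Finset (Fˣ × Fˣ × Fˣ) :=
  univ.filter fun p => chi ℓ hg p.1 = i ∧ chi ℓ hg p.2.1 = j ∧ chi ℓ hg p.2.2 = 0 ∧
    ((p.1 : F) = (p.2.2 : F) * (1 + (p.2.1 : F)) - 1)

include hg hℓ in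
lemma sumX (i j : ZMod ℓ) :
    ∑ m : ZMod ℓ, (PP ℓ hg m i).card * (PP ℓ hg m j).card
      = ((XS ℓ hg i j).filter fun p => p.1 ≠ 1).card := by
  classical
  set QQ : Finset ((Fˣ × Fˣ) × (Fˣ × Fˣ)) := univ.filter fun r =>
    chi ℓ hg r.1.1 = chi ℓ hg r.2.1 ∧ chi ℓ hg r.1.2 = i ∧ chi ℓ hg r.2.2 = j ∧
    ((r.1.2 : F) = 1 + (r.1.1 : F)) ∧ ((r.2.2 : F) = 1 + (r.2.1 : F)) with hQQ
  have step1 : QQ.card = ∑ m : ZMod ℓ, (PP ℓ hg m i ×ˢ PP ℓ hg m j).card := by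
    rw [Finset.card_eq_sum_card_fiberwise
      (f := fun r => chi ℓ hg r.1.1) (t := univ) (fun x _ => mem_univ _)]
    refine Finset.sum_congr rfl fun m _ => ?_
    congr 1
    ext r
    simp only [hQQ, PP, Finset.mem_filter, Finset.mem_product, Finset.mem_univ, true_and,
      Finset.mem_filter]
    constructor
    · rintro ⟨⟨h1, h2, h3, h4, h5⟩, h6⟩
      exact ⟨⟨h6, h2, h4⟩, by rw [← h1, h6], h3, h5⟩
    · rintro ⟨⟨h6, h2, h4⟩, h1, h3, h5⟩
      exact ⟨⟨by rw [h6, h1], h2, h3, h4, h5⟩, h6⟩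
  have step2 : ∀ m : ZMod ℓ, (PP ℓ hg m i ×ˢ PP ℓ hg m j).card
      = (PP ℓ hg m i).card * (PP ℓ hg m j).card := fun m => Finset.card_product _ _
  have step3 : QQ.card = ((XS ℓ hg i j).filter fun p => p.1 ≠ 1).card := by
    apply Finset.card_bij (fun r _ => (r.1.2, r.2.2, r.1.1 * r.2.1⁻¹))
    · rintro ⟨⟨u, w⟩, u', w'⟩ hr
      simp only [hQQ, Finset.mem_filter, Finset.mem_univ, true_and] at hr
      obtain ⟨h1, h2, h3, h4, h5⟩ := hr
      simp only [XS, Finset.mem_filter, Finset.mem_univ, true_and]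
      have ht : ((u * u'⁻¹ : Fˣ) : F) * (u' : F) = (u : F) := by
        rw [← Units.val_mul, inv_mul_cancel_right]
      refine ⟨⟨h2, h3, ?_, ?_⟩, ?_⟩
      · rw [chi_mul hg hℓ, chi_inv hg hℓ, h1]; ring
      · rw [h4, h5]; linear_combination -ht
      · intro hcon
        have : (w : F) = 1 := by rw [hcon, Units.val_one]
        rw [h4] at this
        exact Units.ne_zero u (by linear_combination this)
    · rintro ⟨⟨u, w⟩, u', w'⟩ hr ⟨⟨v, x⟩, v', x'⟩ hr' h
      simp only [hQQ, Finset.mem_filter, Finset.mem_univ, true_and] at hr hr'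
      simp only [Prod.mk.injEq] at h
      obtain ⟨e1, e2, e3⟩ := h
      have hu : u = v := by
        apply Units.ext
        have := hr'.2.2.2.1
        rw [← e1, hr.2.2.2.1] at this
        exact add_left_cancel this
      have hu' : u' = v' := by
        apply Units.ext
        have := hr'.2.2.2.2
        rw [← e2, hr.2.2.2.2] at this
        exact add_left_cancel this
      simp [hu, hu', e1, e2]
    · rintro ⟨a, b, t⟩ hb
      simp only [XS, Finset.mem_filter, Finset.mem_univ, true_and] at hb
      obtain ⟨⟨h1, h2, h3, h4⟩, h5⟩ := hb
      have ha1 : (a : F) - 1 ≠ 0 := by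
        intro hcon
        apply h5
        apply Units.ext
        rw [Units.val_one]
        linear_combination hcon
      have hb1 : (b : F) - 1 ≠ 0 := by
        intro hcon
        apply ha1
        have hb2 : (b : F) = 1 := by linear_combination hcon
        rw [h4, hb2]; ring
      set u : Fˣ := Units.mk0 ((a : F) - 1) ha1 with hu
      set u' : Fˣ := Units.mk0 ((b : F) - 1) hb1 with hu'
      have hut : u = t * u' := by
        apply Units.ext
        rw [Units.val_mul, hu, hu']
        simp only [Units.val_mk0]
        linear_combination h4
      refine ⟨((u, a), (u', b)), ?_, ?_⟩
      · simp only [hQQ, Finset.mem_filter, Finset.mem_univ, true_and]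
        refine ⟨?_, h1, h2, ?_, ?_⟩
        · rw [hut, chi_mul hg hℓ, h3, zero_add]
        · show (a : F) = 1 + (u : F)
          rw [hu]; simp only [Units.val_mk0]; ring
        · show (b : F) = 1 + (u' : F)
          rw [hu']; simp only [Units.val_mk0]; ring
      · have huu : u * u'⁻¹ = t := by rw [hut]; group
        simp [huu]
  rw [← step3, step1]
  exact (Finset.sum_congr rfl fun m _ => step2 m).symm

include hg hℓ in
lemma sumY (i j : ZMod ℓ) :
    ∑ m : ZMod ℓ, (PP ℓ hg i m).card * (PP ℓ hg j m).card
      = ((YS ℓ hg i j).filter fun p => p.1 ≠ -1).card := by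
  classical
  set QQ : Finset ((Fˣ × Fˣ) × (Fˣ × Fˣ)) := univ.filter fun r =>
    chi ℓ hg r.1.2 = chi ℓ hg r.2.2 ∧ chi ℓ hg r.1.1 = i ∧ chi ℓ hg r.2.1 = j ∧
    ((r.1.2 : F) = 1 + (r.1.1 : F)) ∧ ((r.2.2 : F) = 1 + (r.2.1 : F)) with hQQ
  have step1 : QQ.card = ∑ m : ZMod ℓ, (PP ℓ hg i m ×ˢ PP ℓ hg j m).card := by
    rw [Finset.card_eq_sum_card_fiberwise
      (f := fun r => chi ℓ hg r.1.2) (t := univ) (fun x _ => mem_univ _)]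
    refine Finset.sum_congr rfl fun m _ => ?_
    congr 1
    ext r
    simp only [hQQ, PP, Finset.mem_filter, Finset.mem_product, Finset.mem_univ, true_and,
      Finset.mem_filter]
    constructor
    · rintro ⟨⟨h1, h2, h3, h4, h5⟩, h6⟩
      exact ⟨⟨h2, h6, h4⟩, h3, by rw [← h1, h6], h5⟩
    · rintro ⟨⟨h2, h6, h4⟩, h3, h1, h5⟩
      exact ⟨⟨by rw [h6, h1], h2, h3, h4, h5⟩, h6⟩
  have step3 : QQ.card = ((YS ℓ hg i j).filter fun p => p.1 ≠ -1).card := by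
    apply Finset.card_bij (fun r _ => (r.1.1, r.2.1, r.1.2 * r.2.2⁻¹))
    · rintro ⟨⟨u, w⟩, u', w'⟩ hr
      simp only [hQQ, Finset.mem_filter, Finset.mem_univ, true_and] at hr
      obtain ⟨h1, h2, h3, h4, h5⟩ := hr
      simp only [YS, Finset.mem_filter, Finset.mem_univ, true_and]
      have ht : ((w * w'⁻¹ : Fˣ) : F) * (w' : F) = (w : F) := by
        rw [← Units.val_mul, inv_mul_cancel_right]
      refine ⟨⟨h2, h3, ?_, ?_⟩, ?_⟩
      · rw [chi_mul hg hℓ, chi_inv hg hℓ, h1]; ring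
      · linear_combination -ht - h4 + ((w * w'⁻¹ : Fˣ) : F) * h5
      · intro hcon
        have hv : (u : F) = -1 := by rw [hcon, Units.val_neg, Units.val_one]
        exact Units.ne_zero w (by rw [h4, hv]; ring)
    · rintro ⟨⟨u, w⟩, u', w'⟩ hr ⟨⟨v, x⟩, v', x'⟩ hr' h
      simp only [hQQ, Finset.mem_filter, Finset.mem_univ, true_and] at hr hr'
      simp only [Prod.mk.injEq] at h
      obtain ⟨e1, e2, e3⟩ := h
      have hw : w = x := by
        apply Units.ext
        rw [hr.2.2.2.1, hr'.2.2.2.1, e1]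
      have hw' : w' = x' := by
        apply Units.ext
        rw [hr.2.2.2.2, hr'.2.2.2.2, e2]
      simp [hw, hw', e1, e2]
    · rintro ⟨a, b, s⟩ hb
      simp only [YS, Finset.mem_filter, Finset.mem_univ, true_and] at hb
      obtain ⟨⟨h1, h2, h3, h4⟩, h5⟩ := hb
      have ha1 : (1 : F) + (a : F) ≠ 0 := by
        intro hcon
        apply h5
        apply Units.ext
        rw [Units.val_neg, Units.val_one]
        linear_combination hcon
      have hb1 : (1 : F) + (b : F) ≠ 0 := by
        intro hcon
        apply ha1
        have he : (1 : F) + (a : F) = (s : F) * (1 + (b : F)) := by linear_combination h4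
        rw [he, hcon, mul_zero]
      set w : Fˣ := Units.mk0 ((1 : F) + (a : F)) ha1 with hw
      set w' : Fˣ := Units.mk0 ((1 : F) + (b : F)) hb1 with hw'
      have hwt : w = s * w' := by
        apply Units.ext
        rw [Units.val_mul, hw, hw']
        simp only [Units.val_mk0]
        linear_combination h4
      refine ⟨((a, w), (b, w')), ?_, ?_⟩
      · simp only [hQQ, Finset.mem_filter, Finset.mem_univ, true_and]
        refine ⟨?_, h1, h2, ?_, ?_⟩
        · rw [hwt, chi_mul hg hℓ, h3, zero_add]
        · show (w : F) = 1 + (a : F)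
          rw [hw]; simp only [Units.val_mk0]
        · show (w' : F) = 1 + (b : F)
          rw [hw']; simp only [Units.val_mk0]
      · have hww : w * w'⁻¹ = s := by rw [hwt]; group
        simp [hww]
  rw [← step3, step1]
  exact (Finset.sum_congr rfl fun m _ => (Finset.card_product _ _)).symm

include hg hℓ in
lemma degX (i j : ZMod ℓ) :
    ((XS ℓ hg i j).filter fun p => p.1 ≠ 1).card
      + (if i = 0 ∧ j = 0 then (Fintype.card F - 1) / ℓ else 0)
      = (XS ℓ hg i j).card := by
  classical
  have hsplit := Finset.card_filter_add_card_filter_not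
    (s := XS ℓ hg i j) (p := fun p => p.1 = (1 : Fˣ))
  have hdeg : ((XS ℓ hg i j).filter fun p => p.1 = (1 : Fˣ)).card
      = (if i = 0 ∧ j = 0 then (Fintype.card F - 1) / ℓ else 0) := by
    by_cases hij : i = 0 ∧ j = 0
    · rw [if_pos hij, ← card_fiber hg hℓ (0 : ZMod ℓ)]
      apply Finset.card_nbij' (fun p => p.2.2) (fun t => (1, 1, t))
      · rintro ⟨a, b, t⟩ hp
        simp only [Finset.mem_coe, XS, Finset.mem_filter, Finset.mem_univ, true_and] at hp ⊢
        exact hp.1.2.2.1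
      · intro t ht
        simp only [Finset.mem_coe, Finset.mem_filter, Finset.mem_univ, true_and] at ht
        simp only [Finset.mem_coe, XS, Finset.mem_filter, Finset.mem_univ, true_and]
        refine ⟨⟨(chi_one hg hℓ).trans hij.1.symm, (chi_one hg hℓ).trans hij.2.symm, ht, ?_⟩, trivial⟩
        rw [Units.val_one]; ring
      · rintro ⟨a, b, t⟩ hp
        simp only [Finset.mem_coe, XS, Finset.mem_filter, Finset.mem_univ, true_and] at hp
        obtain ⟨⟨h1, h2, h3, h4⟩, h5⟩ := hp
        have hb : (1 : Fˣ) = b := by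
          apply Units.ext
          rw [h5, Units.val_one] at h4
          have hz : (t : F) * ((b : F) - 1) = 0 := by linear_combination -h4
          rcases mul_eq_zero.mp hz with hz | hz
          · exact absurd hz (Units.ne_zero t)
          · rw [Units.val_one]; linear_combination -hz
        simp only [Prod.mk.injEq]
        exact ⟨h5.symm, hb, trivial⟩
      · intro t _; rfl
    · rw [if_neg hij, Finset.card_eq_zero, Finset.filter_eq_empty_iff]
      rintro ⟨a, b, t⟩ hp hcon
      simp only [XS, Finset.mem_filter, Finset.mem_univ, true_and] at hp
      obtain ⟨h1, h2, h3, h4⟩ := hp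
      simp only at hcon
      apply hij
      have hb : (b : F) = 1 := by
        rw [hcon, Units.val_one] at h4
        have hz : (t : F) * ((b : F) - 1) = 0 := by linear_combination -h4
        rcases mul_eq_zero.mp hz with hz | hz
        · exact absurd hz (Units.ne_zero t)
        · linear_combination hz
      constructor
      · rw [← h1, hcon, chi_one hg hℓ]
      · rw [← h2, show b = 1 from Units.ext (by rw [hb, Units.val_one]), chi_one hg hℓ]
  simp only [ne_eq]
  omega

include hg hℓ in
lemma degY (i j : ZMod ℓ) :
    ((YS ℓ hg i j).filter fun p => p.1 ≠ -1).card
      + (if i = chi ℓ hg (-1) ∧ j = chi ℓ hg (-1) then (Fintype.card F - 1) / ℓ else 0)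
      = (YS ℓ hg i j).card := by
  classical
  have hsplit := Finset.card_filter_add_card_filter_not
    (s := YS ℓ hg i j) (p := fun p => p.1 = (-1 : Fˣ))
  have hdeg : ((YS ℓ hg i j).filter fun p => p.1 = (-1 : Fˣ)).card
      = (if i = chi ℓ hg (-1) ∧ j = chi ℓ hg (-1) then (Fintype.card F - 1) / ℓ else 0) := by
    by_cases hij : i = chi ℓ hg (-1) ∧ j = chi ℓ hg (-1)
    · rw [if_pos hij, ← card_fiber hg hℓ (0 : ZMod ℓ)]
      apply Finset.card_nbij' (fun p => p.2.2) (fun t => (-1, -1, t))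
      · rintro ⟨a, b, t⟩ hp
        simp only [Finset.mem_coe, YS, Finset.mem_filter, Finset.mem_univ, true_and] at hp ⊢
        exact hp.1.2.2.1
      · intro t ht
        simp only [Finset.mem_coe, Finset.mem_filter, Finset.mem_univ, true_and] at ht
        simp only [Finset.mem_coe, YS, Finset.mem_filter, Finset.mem_univ, true_and]
        refine ⟨⟨hij.1.symm, hij.2.symm, ht, ?_⟩, trivial⟩
        rw [Units.val_neg, Units.val_one]; ring
      · rintro ⟨a, b, t⟩ hp
        simp only [Finset.mem_coe, YS, Finset.mem_filter, Finset.mem_univ, true_and] at hp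
        obtain ⟨⟨h1, h2, h3, h4⟩, h5⟩ := hp
        have hb : (-1 : Fˣ) = b := by
          apply Units.ext
          rw [h5, Units.val_neg, Units.val_one] at h4
          have hz : (t : F) * ((b : F) + 1) = 0 := by linear_combination -h4
          rcases mul_eq_zero.mp hz with hz | hz
          · exact absurd hz (Units.ne_zero t)
          · rw [Units.val_neg, Units.val_one]; linear_combination -hz
        simp only [Prod.mk.injEq]
        exact ⟨h5.symm, hb, trivial⟩
      · intro t _; rfl
    · rw [if_neg hij, Finset.card_eq_zero, Finset.filter_eq_empty_iff]
      rintro ⟨a, b, t⟩ hp hcon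
      simp only [YS, Finset.mem_filter, Finset.mem_univ, true_and] at hp
      obtain ⟨h1, h2, h3, h4⟩ := hp
      simp only at hcon
      apply hij
      have hb : (b : F) = -1 := by
        rw [hcon, Units.val_neg, Units.val_one] at h4
        have hz : (t : F) * ((b : F) + 1) = 0 := by linear_combination -h4
        rcases mul_eq_zero.mp hz with hz | hz
        · exact absurd hz (Units.ne_zero t)
        · linear_combination hz
      constructor
      · rw [← h1, hcon]
      · rw [← h2, show b = -1 from Units.ext (by rw [hb, Units.val_neg, Units.val_one])]
  simp only [ne_eq]
  omega

include hg hℓ in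
lemma XYcard (i j : ZMod ℓ) : (XS ℓ hg i j).card = (YS ℓ hg i j).card := by
  classical
  apply Finset.card_nbij' (fun p => (p.1 * p.2.2⁻¹, p.2.2 * p.2.1, p.2.2⁻¹))
    (fun p => (p.1 * p.2.2⁻¹, p.2.2 * p.2.1, p.2.2⁻¹))
  · rintro ⟨a, b, t⟩ hp
    simp only [Finset.mem_coe, XS, YS, Finset.mem_filter, Finset.mem_univ, true_and] at hp ⊢
    obtain ⟨h1, h2, h3, h4⟩ := hp
    have htne : (t : F) ≠ 0 := Units.ne_zero t
    refine ⟨?_, ?_, ?_, ?_⟩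
    · rw [chi_mul hg hℓ, chi_inv hg hℓ, h3, h1]; ring
    · rw [chi_mul hg hℓ, h3, h2]; ring
    · rw [chi_inv hg hℓ, h3]; ring
    · rw [Units.val_mul, Units.val_mul, Units.val_inv_eq_inv_val]
      field_simp
      linear_combination h4
  · rintro ⟨a, b, s⟩ hp
    simp only [Finset.mem_coe, XS, YS, Finset.mem_filter, Finset.mem_univ, true_and] at hp ⊢
    obtain ⟨h1, h2, h3, h4⟩ := hp
    have hsne : (s : F) ≠ 0 := Units.ne_zero s
    refine ⟨?_, ?_, ?_, ?_⟩
    · rw [chi_mul hg hℓ, chi_inv hg hℓ, h3, h1]; ring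
    · rw [chi_mul hg hℓ, h3, h2]; ring
    · rw [chi_inv hg hℓ, h3]; ring
    · rw [Units.val_mul, Units.val_mul, Units.val_inv_eq_inv_val]
      field_simp
      linear_combination h4
  · rintro ⟨a, b, t⟩ _
    simp only [Prod.mk.injEq]
    refine ⟨by group, by group, inv_inv t⟩
  · rintro ⟨a, b, s⟩ _
    simp only [Prod.mk.injEq]
    refine ⟨by group, by group, inv_inv s⟩

include hg hℓ in
lemma key (i j : ZMod ℓ) :
    ((∑ m : ZMod ℓ, (PP ℓ hg m i).card * (PP ℓ hg m j).card : ℕ) : ℤ)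
      - ((∑ m : ZMod ℓ, (PP ℓ hg i m).card * (PP ℓ hg j m).card : ℕ) : ℤ)
    = (if i = chi ℓ hg (-1) ∧ j = chi ℓ hg (-1)
        then (((Fintype.card F - 1) / ℓ : ℕ) : ℤ) else 0)
      - (if i = 0 ∧ j = 0 then (((Fintype.card F - 1) / ℓ : ℕ) : ℤ) else 0) := by
  rw [sumX hg hℓ i j, sumY hg hℓ i j]
  have h3 := degX hg hℓ i j
  have h4 := degY hg hℓ i j
  have h5 := XYcard hg hℓ i j
  split_ifs at h3 h4 ⊢ <;> omega

lemma iota_bij : Function.Bijective (fun i : Fin ℓ => ((i : ℕ) : ZMod ℓ)) := by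
  constructor
  · intro a b h
    simp only at h
    have hmod := (ZMod.natCast_eq_natCast_iff _ _ _).mp h
    have ha : (a : ℕ) % ℓ = (a : ℕ) := Nat.mod_eq_of_lt a.isLt
    have hb : (b : ℕ) % ℓ = (b : ℕ) := Nat.mod_eq_of_lt b.isLt
    unfold Nat.ModEq at hmod
    exact Fin.ext (by omega)
  · intro c
    exact ⟨⟨c.val, ZMod.val_lt c⟩, ZMod.natCast_rightInverse c⟩

lemma iota_natCast (m : ℕ) : (((Fin.ofNat ℓ m : Fin ℓ) : ℕ) : ZMod ℓ) = (m : ZMod ℓ) := by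
  rw [Fin.val_ofNat, ZMod.natCast_mod]

end basic

end CycAux

end CycAuxSection

open CycAux

theorem cycMatrix_almost_normal {F : Type*} [Field F] [Fintype F] (g : Fˣ) (ℓ : ℕ)
    [NeZero ℓ] (hg : ∀ x : Fˣ, x ∈ Subgroup.zpowers g)
    (hodd : Odd (Fintype.card F)) (hℓ : ℓ ∣ Fintype.card F - 1)
    (k : ℕ) (hk : k = (Fintype.card F - 1) / ℓ)
    (q' : Fin ℓ) (hq' : q' = (Fin.ofNat ℓ ((Fintype.card F - 1) / 2 : ℕ) : Fin ℓ))
    (A : Matrix (Fin ℓ) (Fin ℓ) ℤ) (hA : A = cycMatrix g ℓ) :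
    Aᵀ * A - A * Aᵀ =
      (k : ℤ) • (Matrix.single q' q' 1 - Matrix.single 0 0 1) ∧
    (Aᵀ * A = A * Aᵀ ↔ Even k) := by
  classical
  set q := Fintype.card F with hq
  have hchi : chi ℓ hg (-1) = (((q - 1) / 2 : ℕ) : ZMod ℓ) := chi_neg_one hg hℓ hodd
  have hiotaq' : ((q' : ℕ) : ZMod ℓ) = (((q - 1) / 2 : ℕ) : ZMod ℓ) := by
    rw [hq']; exact iota_natCast _
  have hinj : ∀ a b : Fin ℓ, (((a : ℕ) : ZMod ℓ) = ((b : ℕ) : ZMod ℓ)) ↔ b = a := by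
    intro a b
    constructor
    · intro h; exact (iota_bij.1 h).symm
    · intro h; rw [h]
  have hAentry : ∀ a b : Fin ℓ,
      A a b = ((PP ℓ hg ((a : ℕ) : ZMod ℓ) ((b : ℕ) : ZMod ℓ)).card : ℤ) := by
    intro a b
    rw [hA]
    show ((cyc g ℓ ((a : ℕ) : ℤ) ((b : ℕ) : ℤ) : ℕ) : ℤ) = _
    rw [cyc_eq hg hℓ]
    simp only [Int.cast_natCast]
  have h00 : (0 : ZMod ℓ) = (((0 : Fin ℓ) : ℕ) : ZMod ℓ) := by simp
  have Hmain : Aᵀ * A - A * Aᵀ =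
      (k : ℤ) • (Matrix.single q' q' 1 - Matrix.single 0 0 1) := by
    ext i j
    rw [Matrix.sub_apply, Matrix.mul_apply, Matrix.mul_apply]
    simp only [Matrix.transpose_apply]
    have e1 : ∑ m : Fin ℓ, A m i * A m j
        = ((∑ m : ZMod ℓ, (PP ℓ hg m ((i : ℕ) : ZMod ℓ)).card
            * (PP ℓ hg m ((j : ℕ) : ZMod ℓ)).card : ℕ) : ℤ) := by
      push_cast
      refine Fintype.sum_bijective _ (iota_bij (ℓ := ℓ)) _ _ fun m => ?_
      rw [hAentry m i, hAentry m j]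
    have e2 : ∑ m : Fin ℓ, A i m * A j m
        = ((∑ m : ZMod ℓ, (PP ℓ hg ((i : ℕ) : ZMod ℓ) m).card
            * (PP ℓ hg ((j : ℕ) : ZMod ℓ) m).card : ℕ) : ℤ) := by
      push_cast
      refine Fintype.sum_bijective _ (iota_bij (ℓ := ℓ)) _ _ fun m => ?_
      rw [hAentry i m, hAentry j m]
    rw [e1, e2, key hg hℓ, hchi, ← hiotaq', h00]
    simp only [hinj]
    rw [hk]
    simp only [Matrix.smul_apply, Matrix.sub_apply, Matrix.single, Matrix.of_apply,
      smul_eq_mul]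
    split_ifs <;> ring
  refine ⟨Hmain, ?_⟩
  have hlk : ℓ * k = q - 1 := by rw [hk]; exact Nat.mul_div_cancel' hℓ
  have h2q : 2 * ((q - 1) / 2) = q - 1 := by
    have h2 : 2 ≤ q := Fintype.one_lt_card
    rcases hodd with ⟨r, hr⟩
    omega
  constructor
  · intro heq
    by_contra hnev
    have hq'ne : q' ≠ 0 := by
      intro h0
      apply hnev
      have h1 : (((q - 1) / 2 : ℕ) : ZMod ℓ) = 0 := by
        rw [← hiotaq', h0]
        simp
      obtain ⟨m, hm⟩ := (ZMod.natCast_eq_zero_iff _ _).mp h1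
      have h3 : ℓ * k = ℓ * (2 * m) := by
        rw [hlk, ← h2q, hm]; ring
      have h4 : k = 2 * m := Nat.eq_of_mul_eq_mul_left (Nat.pos_of_ne_zero (NeZero.ne ℓ)) h3
      exact ⟨m, by omega⟩
    have hzero : Aᵀ * A - A * Aᵀ = 0 := sub_eq_zero.mpr heq
    rw [hzero] at Hmain
    have hpt := congrFun (congrFun Hmain q') q'
    have hne : ¬((0 : Fin ℓ) = q' ∧ (0 : Fin ℓ) = q') := fun h => hq'ne h.1.symm
    simp [Matrix.single, hne] at hpt
    rcases hpt with hpt | hpt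
    · exact hnev (by simp [hpt])
    · rw [if_neg (fun h => hq'ne h.symm)] at hpt
      norm_num at hpt
  · intro hev
    obtain ⟨m, hm⟩ := hev
    have hqm : q - 1 = 2 * (ℓ * m) := by
      rw [← hlk, hm]; ring
    have hdvd : (q - 1) / 2 = ℓ * m := by
      rw [hqm]; exact Nat.mul_div_cancel_left _ (by norm_num)
    have hq'0 : q' = 0 := by
      have hz : ((q' : ℕ) : ZMod ℓ) = (((0 : Fin ℓ) : ℕ) : ZMod ℓ) := by
        rw [hiotaq', ← h00, hdvd]
        push_cast
        simp
      exact iota_bij.1 hz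
    have hz : Aᵀ * A - A * Aᵀ = 0 := by rw [Hmain, hq'0]; simp
    exact sub_eq_zero.mp hz
end

section
/- For all integers i, j, u, v: Σ_{w=0}^{ℓ-1} (w-u, i-u)(w-v, j-v) = k(δ_{i,j} δ_{u,v} - δ_{i,u} δ_{j,v}) + Σ_{w=0}^{ℓ-1} (w-v, u-v)(w-j, i-j), where δ_{s,t} = 1 if s ≡ t (mod ℓ) and 0 otherwise, and k = (q-1)/ℓ. -/
set_option linter.unusedSectionVars false

open Finset

namespace CycAux

variable {F : Type*} [Field F] [Fintype F] (g : Fˣ) (ℓ : ℕ)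

/-- `c` lies in the coset `g^a · K` of the `ℓ`-th powers. -/
def isPow (a : ℤ) (c : F) : Prop := ∃ y : Fˣ, c = ((g ^ a * y ^ ℓ : Fˣ) : F)

variable {g ℓ}

lemma isPow.ne_zero {a : ℤ} {c : F} (h : isPow g ℓ a c) : c ≠ 0 := by
  obtain ⟨y, rfl⟩ := h; exact Units.ne_zero _

lemma isPow.mul {a b : ℤ} {c d : F} (h1 : isPow g ℓ a c) (h2 : isPow g ℓ b d) :
    isPow g ℓ (a + b) (c * d) := by
  obtain ⟨y, rfl⟩ := h1; obtain ⟨z, rfl⟩ := h2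
  refine ⟨y * z, ?_⟩
  have : (g ^ (a + b) * (y * z) ^ ℓ : Fˣ) = (g ^ a * y ^ ℓ) * (g ^ b * z ^ ℓ) := by
    rw [zpow_add, mul_pow, mul_mul_mul_comm]
  rw [this]; push_cast; ring

lemma isPow.inv {a : ℤ} {c : F} (h : isPow g ℓ a c) : isPow g ℓ (-a) c⁻¹ := by
  obtain ⟨y, rfl⟩ := h
  refine ⟨y⁻¹, ?_⟩
  have : (g ^ (-a) * (y⁻¹) ^ ℓ : Fˣ) = (g ^ a * y ^ ℓ)⁻¹ := by
    rw [zpow_neg, inv_pow, mul_inv]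
  rw [this]; push_cast; ring

lemma isPow.div {a b : ℤ} {c d : F} (h1 : isPow g ℓ a c) (h2 : isPow g ℓ b d) :
    isPow g ℓ (a - b) (c / d) := by
  have := h1.mul h2.inv
  rwa [sub_eq_add_neg, div_eq_mul_inv]

lemma isPow_congr {a b : ℤ} {c d : F} (h : isPow g ℓ a c) (hab : a = b) (hcd : c = d) :
    isPow g ℓ b d := hab ▸ hcd ▸ h

variable (hg : ∀ x : Fˣ, x ∈ Subgroup.zpowers g) (hℓ : ℓ ∣ Fintype.card F - 1)
include hg hℓ

lemma isPow_one_iff {a : ℤ} : isPow g ℓ a (1 : F) ↔ (ℓ : ℤ) ∣ a := by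
  classical
  have hcard : orderOf g = Fintype.card F - 1 := by
    rw [orderOf_eq_card_of_forall_mem_zpowers hg, Nat.card_eq_fintype_card,
      Fintype.card_units]
  constructor
  · rintro ⟨y, hy⟩
    obtain ⟨m, hm⟩ := Subgroup.mem_zpowers_iff.mp (hg y)
    have hy' : (g ^ a * y ^ ℓ : Fˣ) = 1 := Units.ext (by rw [← hy]; rfl)
    have : (g : Fˣ) ^ (a + m * ℓ) = 1 := by
      rw [zpow_add, zpow_mul, hm, zpow_natCast]; exact hy'
    have hdvd : ((orderOf g : ℤ)) ∣ a + m * ℓ := orderOf_dvd_iff_zpow_eq_one.mpr this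
    rw [hcard] at hdvd
    have hdvd2 : (ℓ : ℤ) ∣ a + m * ℓ :=
      dvd_trans (Int.natCast_dvd_natCast.mpr hℓ) hdvd
    obtain ⟨t, ht⟩ := hdvd2
    exact ⟨t - m, by linarith⟩
  · rintro ⟨m, rfl⟩
    refine ⟨g ^ (-m), ?_⟩
    have : (g ^ ((ℓ : ℤ) * m) * (g ^ (-m)) ^ ℓ : Fˣ) = 1 := by
      rw [← zpow_natCast (g ^ (-m : ℤ)) ℓ, ← zpow_mul, ← zpow_add,
        show (ℓ:ℤ) * m + -m * ℓ = 0 by ring, zpow_zero]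
    rw [this]; rfl


lemma dvd_of_isPow {a b : ℤ} {c : F} (h1 : isPow g ℓ a c) (h2 : isPow g ℓ b c) :
    (ℓ : ℤ) ∣ a - b := by
  have h := h1.div h2
  rw [div_self h1.ne_zero] at h
  exact (isPow_one_iff hg hℓ).mp h

omit hg hℓ

lemma isPow.of_dvd {a b : ℤ} {c : F} (hab : (ℓ : ℤ) ∣ b - a) (h : isPow g ℓ a c) :
    isPow g ℓ b c := by
  obtain ⟨m, hm⟩ := hab
  obtain ⟨y, rfl⟩ := h
  refine ⟨g ^ (-m) * y, ?_⟩
  have : (g ^ b * (g ^ (-m) * y) ^ ℓ : Fˣ) = g ^ a * y ^ ℓ := by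
    rw [mul_pow, ← zpow_natCast (g ^ (-m : ℤ)) ℓ, ← zpow_mul, ← mul_assoc, ← zpow_add,
      show b + -m * ℓ = a by linarith]
  rw [this]

lemma exists_rep (hg : ∀ x : Fˣ, x ∈ Subgroup.zpowers g) {c : F} (hc : c ≠ 0) :
    ∃ m : ℤ, isPow g ℓ m c := by
  obtain ⟨m, hm⟩ := Subgroup.mem_zpowers_iff.mp (hg (Units.mk0 c hc))
  refine ⟨m, 1, ?_⟩
  have : ((g ^ m : Fˣ) : F) = c := by rw [hm]; rfl
  rw [← this]
  simp


open scoped Classical in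
lemma card_isPow (hg : ∀ x : Fˣ, x ∈ Subgroup.zpowers g) (hℓ : ℓ ∣ Fintype.card F - 1)
    (a : ℤ) :
    (univ.filter fun x : F => isPow g ℓ a x).card = (Fintype.card F - 1) / ℓ := by
  have hcard : orderOf g = Fintype.card F - 1 := by
    rw [orderOf_eq_card_of_forall_mem_zpowers hg, Nat.card_eq_fintype_card,
      Fintype.card_units]
  have h1 : (univ.filter fun x : F => isPow g ℓ a x)
      = Finset.image (fun y : Fˣ => ((g ^ a * y ^ ℓ : Fˣ) : F)) univ := by
    ext x
    simp [isPow, eq_comm]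
  have h2 : (fun y : Fˣ => ((g ^ a * y ^ ℓ : Fˣ) : F))
      = (fun t : Fˣ => (t : F)) ∘ ((fun t : Fˣ => g ^ a * t) ∘ (fun y : Fˣ => y ^ ℓ)) := rfl
  rw [h1, h2, ← Finset.image_image, ← Finset.image_image,
    Finset.card_image_of_injective _ Units.val_injective,
    Finset.card_image_of_injective _ (mul_right_injective (g ^ a))]
  have h3 : Finset.image (fun y : Fˣ => y ^ ℓ) univ
      = ((Subgroup.zpowers (g ^ ℓ) : Subgroup Fˣ) : Set Fˣ).toFinset := by
    ext t
    simp only [Finset.mem_image, Finset.mem_univ, true_and, Set.mem_toFinset, SetLike.mem_coe,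
      Subgroup.mem_zpowers_iff]
    constructor
    · rintro ⟨y, rfl⟩
      obtain ⟨m, rfl⟩ := Subgroup.mem_zpowers_iff.mp (hg y)
      exact ⟨m, by rw [← zpow_natCast (g ^ (m:ℤ)) ℓ, ← zpow_mul, mul_comm,
        zpow_mul, zpow_natCast]⟩
    · rintro ⟨m, rfl⟩
      exact ⟨g ^ m, by rw [← zpow_natCast (g ^ (m:ℤ)) ℓ, ← zpow_mul, mul_comm,
        zpow_mul, zpow_natCast]⟩
  rw [h3, ← Set.ncard_eq_toFinset_card', ← Nat.card_coe_set_eq]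
  have h4 : Nat.card ((Subgroup.zpowers (g ^ ℓ) : Subgroup Fˣ) : Set Fˣ)
      = Nat.card (Subgroup.zpowers (g ^ ℓ)) := rfl
  rw [h4, Nat.card_zpowers, orderOf_pow, hcard, Nat.gcd_eq_right hℓ]


variable (g ℓ) in
open scoped Classical in
/-- The finset underlying `cyc g ℓ a b`. -/
noncomputable def Tset (a b : ℤ) : Finset F :=
  univ.filter fun x : F => (∃ y : Fˣ, x = 1 + ((g ^ a * y ^ ℓ : Fˣ) : F)) ∧
    ∃ z : Fˣ, x = ((g ^ b * z ^ ℓ : Fˣ) : F)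

lemma cyc_eq_s13 (a b : ℤ) : cyc g ℓ a b = (Tset g ℓ a b).card := by
  classical
  rw [cyc, Nat.card_eq_fintype_card, Fintype.card_subtype, Tset]

lemma mem_Tset {a b : ℤ} {x : F} :
    x ∈ Tset g ℓ a b ↔ isPow g ℓ a (x - 1) ∧ isPow g ℓ b x := by
  classical
  rw [Tset, mem_filter]
  simp only [mem_univ, true_and, isPow]
  constructor
  · rintro ⟨⟨y, hy⟩, hz⟩
    exact ⟨⟨y, by rw [hy]; ring⟩, hz⟩
  · rintro ⟨⟨y, hy⟩, hz⟩
    exact ⟨⟨y, by rw [← hy]; ring⟩, hz⟩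

variable (g ℓ) in
open scoped Classical in
/-- The pair set counted by `∑ w, cyc (w-u) (i-u) * cyc (w-v) (j-v)`. -/
noncomputable def Afin (u i v j : ℤ) : Finset (F × F) :=
  univ.filter fun p : F × F => isPow g ℓ (i - u) p.1 ∧ isPow g ℓ (j - v) p.2 ∧
    isPow g ℓ (v - u) ((p.1 - 1) / (p.2 - 1))

lemma mem_Afin {u i v j : ℤ} {p : F × F} :
    p ∈ Afin g ℓ u i v j ↔ isPow g ℓ (i - u) p.1 ∧ isPow g ℓ (j - v) p.2 ∧
      isPow g ℓ (v - u) ((p.1 - 1) / (p.2 - 1)) := by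
  classical
  rw [Afin, mem_filter]; simp

include hg hℓ in
lemma sum_Tset (u i v j : ℤ) :
    ∑ w ∈ Finset.range ℓ, (Tset g ℓ ((w : ℤ) - u) (i - u)).card
        * (Tset g ℓ ((w : ℤ) - v) (j - v)).card
      = (Afin g ℓ u i v j).card := by
  classical
  have hℓ0 : 0 < ℓ := by
    rcases Nat.eq_zero_or_pos ℓ with h | h
    · subst h
      have : Fintype.card F - 1 = 0 := Nat.eq_zero_of_zero_dvd hℓ
      have h2 : 2 ≤ Fintype.card F := Fintype.one_lt_card
      omega
    · exact h
  have key : Afin g ℓ u i v j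
      = (Finset.range ℓ).biUnion
        (fun w => Tset g ℓ ((w : ℤ) - u) (i - u) ×ˢ Tset g ℓ ((w : ℤ) - v) (j - v)) := by
    ext p
    rw [mem_Afin, Finset.mem_biUnion]
    constructor
    · rintro ⟨h1, h2, h3⟩
      have hp1 : p.1 ≠ 1 := by
        intro h
        exact h3.ne_zero (by rw [h, sub_self, zero_div])
      have hp2 : p.2 ≠ 1 := by
        intro h
        exact h3.ne_zero (by rw [h, sub_self, div_zero])
      have hc : p.1 - 1 ≠ 0 := sub_ne_zero.mpr hp1
      have hd : p.2 - 1 ≠ 0 := sub_ne_zero.mpr hp2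
      obtain ⟨m, hm⟩ := exists_rep hg hc
      refine ⟨((m + u) % ℓ).toNat, ?_, ?_⟩
      · rw [Finset.mem_range]
        have e1 : 0 ≤ (m + u) % (ℓ : ℤ) := Int.emod_nonneg _ (by exact_mod_cast hℓ0.ne')
        have e2 : (m + u) % (ℓ : ℤ) < ℓ := Int.emod_lt_of_pos _ (by exact_mod_cast hℓ0)
        omega
      · have hw : ((((m + u) % ℓ).toNat : ℤ)) = (m + u) % ℓ :=
          Int.toNat_of_nonneg (Int.emod_nonneg _ (by exact_mod_cast hℓ0.ne'))
        have h1' : isPow g ℓ ((((m + u) % ℓ).toNat : ℤ) - u) (p.1 - 1) := by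
          refine hm.of_dvd ⟨-((m + u) / ℓ), ?_⟩
          rw [hw, Int.emod_def]; ring
        rw [Finset.mem_product, mem_Tset, mem_Tset]
        refine ⟨⟨h1', h1⟩, ?_, h2⟩
        have h2' := h1'.div h3
        refine isPow_congr h2' (by ring) ?_
        field_simp
    · rintro ⟨w, _, hw⟩
      rw [Finset.mem_product, mem_Tset, mem_Tset] at hw
      obtain ⟨⟨ha, hb⟩, hc, hd⟩ := hw
      refine ⟨hb, hd, isPow_congr (ha.div hc) (by ring) rfl⟩
  rw [key, Finset.card_biUnion, ]
  · exact Finset.sum_congr rfl fun w _ => (Finset.card_product _ _).symm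
  · intro w hw w' hw' hne
    rw [Finset.mem_coe, Finset.mem_range] at hw hw'
    rw [Function.onFun, Finset.disjoint_left]
    intro p hp hp'
    rw [Finset.mem_product, mem_Tset, mem_Tset] at hp hp'
    have hdvd := dvd_of_isPow hg hℓ hp.1.1 hp'.1.1
    have : ((w : ℤ) - u) - ((w' : ℤ) - u) = (w : ℤ) - w' := by ring
    rw [this] at hdvd
    have := Int.eq_zero_of_abs_lt_dvd hdvd (by
      rw [abs_lt]
      constructor <;> [linarith [Int.ofNat_lt.mpr hw']; linarith [Int.ofNat_lt.mpr hw]])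
    omega


open scoped Classical in
lemma off_card (u i v j : ℤ) :
    ((Afin g ℓ u i v j).filter fun p : F × F => p.1 ≠ p.2).card
      = ((Afin g ℓ v u j i).filter fun p : F × F => p.1 ≠ p.2).card := by
  refine Finset.card_bij'
    (fun p _ => ((p.2 - 1) / (p.1 - 1), p.1 * (p.2 - 1) / (p.2 * (p.1 - 1))))
    (fun p _ => ((p.1 - 1) * p.2 / ((p.2 - 1) * p.1), (p.1 - 1) / (p.2 - 1)))
    ?_ ?_ ?_ ?_
  · rintro ⟨x, y⟩ hp
    rw [Finset.mem_filter, mem_Afin] at hp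
    obtain ⟨⟨h1, h2, h3⟩, hne⟩ := hp
    replace h1 : isPow g ℓ (i - u) x := h1
    replace h2 : isPow g ℓ (j - v) y := h2
    replace h3 : isPow g ℓ (v - u) ((x - 1) / (y - 1)) := h3
    replace hne : x ≠ y := hne
    have hx0 : x ≠ 0 := h1.ne_zero
    have hy0 : y ≠ 0 := h2.ne_zero
    have hx1 : x - 1 ≠ 0 := by
      intro h; exact h3.ne_zero (by rw [h, zero_div])
    have hy1 : y - 1 ≠ 0 := by
      intro h; exact h3.ne_zero (by rw [h, div_zero])
    have hxy : y - x ≠ 0 := sub_ne_zero.mpr hne.symm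
    have e1 : (y - 1) / (x - 1) - 1 = (y - x) / (x - 1) := by field_simp; ring
    have e2 : x * (y - 1) / (y * (x - 1)) - 1 = (y - x) / (y * (x - 1)) := by
      field_simp; ring
    have c1 : isPow g ℓ (u - v) ((y - 1) / (x - 1)) :=
      isPow_congr h3.inv (by ring) (inv_div _ _)
    rw [Finset.mem_filter, mem_Afin]
    refine ⟨⟨c1, ?_, ?_⟩, ?_⟩
    · exact isPow_congr ((h1.div h2).mul c1) (by ring) (div_mul_div_comm x y (y - 1) (x - 1))
    · refine isPow_congr h2 rfl (Eq.symm ?_)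
      show ((y - 1) / (x - 1) - 1) / (x * (y - 1) / (y * (x - 1)) - 1) = y
      rw [e1, e2, div_eq_iff (div_ne_zero hxy (mul_ne_zero hy0 hx1))]
      field_simp
    · show (y - 1) / (x - 1) ≠ x * (y - 1) / (y * (x - 1))
      rw [← div_mul_div_comm]
      intro h
      have hX : (y - 1) / (x - 1) ≠ 0 := div_ne_zero hy1 hx1
      have h' : (1 : F) * ((y - 1) / (x - 1)) = x / y * ((y - 1) / (x - 1)) := by
        rw [one_mul]; exact h
      have hxy1 : (1 : F) = x / y := mul_right_cancel₀ hX h'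
      exact hne ((div_eq_one_iff_eq hy0).mp hxy1.symm)
  · rintro ⟨x, y⟩ hp
    rw [Finset.mem_filter, mem_Afin] at hp
    obtain ⟨⟨h1, h2, h3⟩, hne⟩ := hp
    replace h1 : isPow g ℓ (u - v) x := h1
    replace h2 : isPow g ℓ (i - j) y := h2
    replace h3 : isPow g ℓ (j - v) ((x - 1) / (y - 1)) := h3
    replace hne : x ≠ y := hne
    have hx0 : x ≠ 0 := h1.ne_zero
    have hy0 : y ≠ 0 := h2.ne_zero
    have hx1 : x - 1 ≠ 0 := by
      intro h; exact h3.ne_zero (by rw [h, zero_div])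
    have hy1 : y - 1 ≠ 0 := by
      intro h; exact h3.ne_zero (by rw [h, div_zero])
    have hxy : x - y ≠ 0 := sub_ne_zero.mpr hne
    have e1 : (x - 1) * y / ((y - 1) * x) - 1 = (x - y) / ((y - 1) * x) := by
      field_simp; ring
    have e2 : (x - 1) / (y - 1) - 1 = (x - y) / (y - 1) := by field_simp; ring
    rw [Finset.mem_filter, mem_Afin]
    refine ⟨⟨?_, h3, ?_⟩, ?_⟩
    · exact isPow_congr (h3.mul (h2.div h1)) (by ring)
        (div_mul_div_comm (x - 1) (y - 1) y x)
    · refine isPow_congr h1.inv (by ring) (Eq.symm ?_)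
      show ((x - 1) * y / ((y - 1) * x) - 1) / ((x - 1) / (y - 1) - 1) = x⁻¹
      rw [e1, e2, div_eq_iff (div_ne_zero hxy hy1)]
      field_simp
    · show (x - 1) * y / ((y - 1) * x) ≠ (x - 1) / (y - 1)
      rw [← div_mul_div_comm]
      intro h
      have hQ : (x - 1) / (y - 1) ≠ 0 := div_ne_zero hx1 hy1
      have h' : (x - 1) / (y - 1) * (y / x) = (x - 1) / (y - 1) * 1 := by
        rw [mul_one]; exact h
      have hxy1 : y / x = 1 := mul_left_cancel₀ hQ h'
      exact hne ((div_eq_one_iff_eq hx0).mp hxy1).symm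
  · rintro ⟨x, y⟩ hp
    rw [Finset.mem_filter, mem_Afin] at hp
    obtain ⟨⟨h1, h2, h3⟩, hne⟩ := hp
    replace h1 : isPow g ℓ (i - u) x := h1
    replace h2 : isPow g ℓ (j - v) y := h2
    replace h3 : isPow g ℓ (v - u) ((x - 1) / (y - 1)) := h3
    replace hne : x ≠ y := hne
    have hx0 : x ≠ 0 := h1.ne_zero
    have hy0 : y ≠ 0 := h2.ne_zero
    have hx1 : x - 1 ≠ 0 := by
      intro h; exact h3.ne_zero (by rw [h, zero_div])
    have hy1 : y - 1 ≠ 0 := by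
      intro h; exact h3.ne_zero (by rw [h, div_zero])
    have hxy : y - x ≠ 0 := sub_ne_zero.mpr hne.symm
    have e1 : (y - 1) / (x - 1) - 1 = (y - x) / (x - 1) := by field_simp; ring
    have e2 : x * (y - 1) / (y * (x - 1)) - 1 = (y - x) / (y * (x - 1)) := by
      field_simp; ring
    rw [Prod.ext_iff]
    constructor
    · show ((y - 1) / (x - 1) - 1) * (x * (y - 1) / (y * (x - 1)))
        / ((x * (y - 1) / (y * (x - 1)) - 1) * ((y - 1) / (x - 1))) = x
      rw [e1, e2, div_eq_iff (mul_ne_zero (div_ne_zero hxy (mul_ne_zero hy0 hx1))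
        (div_ne_zero hy1 hx1))]
      field_simp
    · show ((y - 1) / (x - 1) - 1) / (x * (y - 1) / (y * (x - 1)) - 1) = y
      rw [e1, e2, div_eq_iff (div_ne_zero hxy (mul_ne_zero hy0 hx1))]
      field_simp
  · rintro ⟨x, y⟩ hp
    rw [Finset.mem_filter, mem_Afin] at hp
    obtain ⟨⟨h1, h2, h3⟩, hne⟩ := hp
    replace h1 : isPow g ℓ (u - v) x := h1
    replace h2 : isPow g ℓ (i - j) y := h2
    replace h3 : isPow g ℓ (j - v) ((x - 1) / (y - 1)) := h3
    replace hne : x ≠ y := hne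
    have hx0 : x ≠ 0 := h1.ne_zero
    have hy0 : y ≠ 0 := h2.ne_zero
    have hx1 : x - 1 ≠ 0 := by
      intro h; exact h3.ne_zero (by rw [h, zero_div])
    have hy1 : y - 1 ≠ 0 := by
      intro h; exact h3.ne_zero (by rw [h, div_zero])
    have hxy : x - y ≠ 0 := sub_ne_zero.mpr hne
    have e1 : (x - 1) * y / ((y - 1) * x) - 1 = (x - y) / ((y - 1) * x) := by
      field_simp; ring
    have e2 : (x - 1) / (y - 1) - 1 = (x - y) / (y - 1) := by field_simp; ring
    rw [Prod.ext_iff]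
    constructor
    · show ((x - 1) / (y - 1) - 1) / ((x - 1) * y / ((y - 1) * x) - 1) = x
      rw [e2, e1, div_eq_iff (div_ne_zero hxy (mul_ne_zero hy1 hx0))]
      field_simp
    · show ((x - 1) * y / ((y - 1) * x)) * ((x - 1) / (y - 1) - 1)
        / (((x - 1) / (y - 1)) * ((x - 1) * y / ((y - 1) * x) - 1)) = y
      rw [e2, e1, div_eq_iff (mul_ne_zero (div_ne_zero hx1 hy1)
        (div_ne_zero hxy (mul_ne_zero hy1 hx0)))]
      field_simp


include hg hℓ in
open scoped Classical in
lemma diag_card (u i v j : ℤ) :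
    (((Afin g ℓ u i v j).filter fun p : F × F => p.1 = p.2).card : ℤ)
      = if (ℓ : ℤ) ∣ u - v ∧ (ℓ : ℤ) ∣ i - j then
          (((Fintype.card F - 1) / ℓ : ℕ) : ℤ) - (if (ℓ : ℤ) ∣ i - u then 1 else 0)
        else 0 := by
  classical
  by_cases h : (ℓ : ℤ) ∣ u - v ∧ (ℓ : ℤ) ∣ i - j
  · rw [if_pos h]
    obtain ⟨hd1, hd2⟩ := h
    have himg : (Afin g ℓ u i v j).filter (fun p : F × F => p.1 = p.2)
        = ((univ.filter fun x : F => isPow g ℓ (i - u) x).erase 1).image (fun x => (x, x)) := by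
      ext ⟨x, y⟩
      rw [Finset.mem_filter, mem_Afin, Finset.mem_image]
      constructor
      · rintro ⟨⟨h1, h2, h3⟩, hdiag⟩
        replace hdiag : x = y := hdiag
        subst hdiag
        replace h1 : isPow g ℓ (i - u) x := h1
        replace h3 : isPow g ℓ (v - u) ((x - 1) / (x - 1)) := h3
        have hx1 : x ≠ 1 := by
          intro hx
          exact h3.ne_zero (by rw [hx, sub_self, div_zero])
        exact ⟨x, Finset.mem_erase.mpr ⟨hx1, Finset.mem_filter.mpr ⟨mem_univ _, h1⟩⟩, rfl⟩
      · rintro ⟨x', hx', heq⟩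
        obtain ⟨hx1, hxm⟩ := Finset.mem_erase.mp hx'
        have hxm' : isPow g ℓ (i - u) x' := (Finset.mem_filter.mp hxm).2
        obtain ⟨h1, h2⟩ := Prod.ext_iff.mp heq
        replace h1 : x' = x := h1
        replace h2 : x' = y := h2
        subst h1; subst h2
        refine ⟨⟨hxm', ?_, ?_⟩, rfl⟩
        · refine hxm'.of_dvd ?_
          have : (j - v) - (i - u) = (u - v) - (i - j) := by ring
          rw [this]
          exact dvd_sub hd1 hd2
        · rw [div_self (sub_ne_zero.mpr hx1)]
          refine (isPow_one_iff hg hℓ).mpr ?_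
          have : v - u = -(u - v) := by ring
          rw [this]
          exact hd1.neg_right
    rw [himg, Finset.card_image_of_injective _ (fun a b hab => (Prod.ext_iff.mp hab).1)]
    by_cases h1m : (ℓ : ℤ) ∣ i - u
    · rw [if_pos h1m]
      have h1mem : (1 : F) ∈ univ.filter fun x : F => isPow g ℓ (i - u) x :=
        Finset.mem_filter.mpr ⟨mem_univ _, (isPow_one_iff hg hℓ).mpr h1m⟩
      have hpos : 0 < (univ.filter fun x : F => isPow g ℓ (i - u) x).card :=
        Finset.card_pos.mpr ⟨1, h1mem⟩
      rw [Finset.card_erase_of_mem h1mem, card_isPow hg hℓ] at *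
      rw [Nat.cast_sub (by omega)]
      push_cast
      ring
    · rw [if_neg h1m]
      have h1mem : (1 : F) ∉ univ.filter fun x : F => isPow g ℓ (i - u) x := by
        intro hmem
        exact h1m ((isPow_one_iff hg hℓ).mp (Finset.mem_filter.mp hmem).2)
      rw [Finset.erase_eq_of_notMem h1mem, card_isPow hg hℓ]
      ring
  · rw [if_neg h]
    suffices hempty : (Afin g ℓ u i v j).filter (fun p : F × F => p.1 = p.2) = ∅ by
      rw [hempty]; simp
    rw [Finset.eq_empty_iff_forall_notMem]
    rintro ⟨x, y⟩ hp
    rw [Finset.mem_filter, mem_Afin] at hp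
    obtain ⟨⟨h1, h2, h3⟩, hdiag⟩ := hp
    replace hdiag : x = y := hdiag
    subst hdiag
    replace h1 : isPow g ℓ (i - u) x := h1
    replace h2 : isPow g ℓ (j - v) x := h2
    replace h3 : isPow g ℓ (v - u) ((x - 1) / (x - 1)) := h3
    have hx1 : x ≠ 1 := by
      intro hx
      exact h3.ne_zero (by rw [hx, sub_self, div_zero])
    rw [div_self (sub_ne_zero.mpr hx1)] at h3
    have hd1 : (ℓ : ℤ) ∣ u - v := by
      have := (isPow_one_iff hg hℓ).mp h3
      have e : u - v = -(v - u) := by ring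
      rw [e]
      exact this.neg_right
    refine h ⟨hd1, ?_⟩
    have hd := dvd_of_isPow hg hℓ h1 h2
    have e : i - j = ((i - u) - (j - v)) + (u - v) := by ring
    rw [e]
    exact dvd_add hd hd1

end CycAux

open CycAux

theorem cyc_product_identity {F : Type*} [Field F] [Fintype F] (g : Fˣ) (ℓ : ℕ)
    (hg : ∀ x : Fˣ, x ∈ Subgroup.zpowers g)
    (hodd : Odd (Fintype.card F)) (hℓ : ℓ ∣ Fintype.card F - 1)
    (k : ℕ) (hk : k = (Fintype.card F - 1) / ℓ)
    (δ : ℤ → ℤ → ℤ) (hδ : ∀ s t : ℤ, δ s t = if (s - t) % (ℓ : ℤ) = 0 then 1 else 0)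
    (i j u v : ℤ) :
    ∑ w ∈ Finset.range ℓ,
        (cyc g ℓ ((w : ℤ) - u) (i - u) : ℤ) * (cyc g ℓ ((w : ℤ) - v) (j - v) : ℤ) =
      (k : ℤ) * (δ i j * δ u v - δ i u * δ j v) +
      ∑ w ∈ Finset.range ℓ,
        (cyc g ℓ ((w : ℤ) - v) (u - v) : ℤ) * (cyc g ℓ ((w : ℤ) - j) (i - j) : ℤ) := by
  classical
  have e1 : ∑ w ∈ Finset.range ℓ,
      (cyc g ℓ ((w : ℤ) - u) (i - u) : ℤ) * (cyc g ℓ ((w : ℤ) - v) (j - v) : ℤ)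
      = ((Afin g ℓ u i v j).card : ℤ) := by
    rw [← sum_Tset hg hℓ u i v j]
    push_cast
    refine Finset.sum_congr rfl fun w _ => ?_
    rw [cyc_eq_s13, cyc_eq_s13]
  have e2 : ∑ w ∈ Finset.range ℓ,
      (cyc g ℓ ((w : ℤ) - v) (u - v) : ℤ) * (cyc g ℓ ((w : ℤ) - j) (i - j) : ℤ)
      = ((Afin g ℓ v u j i).card : ℤ) := by
    rw [← sum_Tset hg hℓ v u j i]
    push_cast
    refine Finset.sum_congr rfl fun w _ => ?_
    rw [cyc_eq_s13, cyc_eq_s13]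
  rw [e1, e2]
  have split1 := Finset.card_filter_add_card_filter_not
    (s := Afin g ℓ u i v j) (p := fun p : F × F => p.1 = p.2)
  have split2 := Finset.card_filter_add_card_filter_not
    (s := Afin g ℓ v u j i) (p := fun p : F × F => p.1 = p.2)
  have o := off_card (g := g) (ℓ := ℓ) u i v j
  simp only [ne_eq] at o
  have d1c := diag_card hg hℓ u i v j
  have d2c := diag_card hg hℓ v u j i
  rw [← split1, ← split2]
  push_cast
  rw [d1c, d2c, ← hk]
  have o' : ((((Afin g ℓ u i v j).filter fun p : F × F => ¬ p.1 = p.2).card : ℕ) : ℤ)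
      = (((Afin g ℓ v u j i).filter fun p : F × F => ¬ p.1 = p.2).card : ℕ) := by
    exact_mod_cast o
  rw [o', hδ, hδ, hδ, hδ]
  simp only [show ∀ s t : ℤ, ((s - t) % (ℓ : ℤ) = 0) = ((ℓ : ℤ) ∣ (s - t)) from
    fun s t => propext Int.dvd_iff_emod_eq_zero.symm]
  clear e1 e2 split1 split2 o o' d1c d2c
  generalize ((((Afin g ℓ v u j i).filter fun p : F × F => ¬ p.1 = p.2).card : ℕ) : ℤ) = C
  generalize (k : ℤ) = K
  have h4' : ((ℓ : ℤ) ∣ v - j) ↔ ((ℓ : ℤ) ∣ j - v) := dvd_sub_comm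
  have h3' : ((ℓ : ℤ) ∣ u - i) ↔ ((ℓ : ℤ) ∣ i - u) := dvd_sub_comm
  have h134 : (ℓ:ℤ) ∣ i - j → (ℓ:ℤ) ∣ u - v → (ℓ:ℤ) ∣ i - u → (ℓ:ℤ) ∣ j - v := by
    intro a b c
    have e : j - v = (i - u) + (u - v) - (i - j) := by ring
    rw [e]
    exact dvd_sub (dvd_add c b) a
  have h342 : (ℓ:ℤ) ∣ i - u → (ℓ:ℤ) ∣ j - v → (ℓ:ℤ) ∣ u - v → (ℓ:ℤ) ∣ i - j := by
    intro a b c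
    have e : i - j = (i - u) - (j - v) + (u - v) := by ring
    rw [e]
    exact dvd_add (dvd_sub a b) c
  by_cases h1 : (ℓ:ℤ) ∣ i - j <;> by_cases h2 : (ℓ:ℤ) ∣ u - v <;>
    by_cases h3 : (ℓ:ℤ) ∣ i - u <;> by_cases h4 : (ℓ:ℤ) ∣ j - v <;>
    simp_all <;> ring
end

section
/- If k is odd, then Σ_{w=0}^{ℓ-1} (w, q')² = k + Σ_{w=0}^{ℓ-1} (w, 0)², where q' = ℓ/2 and k = (q-1)/ℓ. -/
namespace CycAux

variable {F : Type*} [Field F] [Fintype F]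

/-- `u` lies in the coset `g^j · (ℓ-th powers)`. -/
def Qc (g : Fˣ) (ℓ : ℕ) (j : ℤ) (u : Fˣ) : Prop := ∃ m : ℤ, u = g ^ (j + (ℓ : ℤ) * m)

/-- `x` is (the image of) a unit in the coset `g^j · (ℓ-th powers)`. -/
def Pc (g : Fˣ) (ℓ : ℕ) (j : ℤ) (x : F) : Prop :=
  ∃ z : Fˣ, x = ((g ^ j * z ^ ℓ : Fˣ) : F)

theorem Qc_mul {g : Fˣ} {ℓ : ℕ} {i j : ℤ} {u v : Fˣ} (hu : Qc g ℓ i u) (hv : Qc g ℓ j v) :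
    Qc g ℓ (i + j) (u * v) := by
  obtain ⟨m, rfl⟩ := hu; obtain ⟨m', rfl⟩ := hv
  exact ⟨m + m', by rw [← zpow_add]; congr 1; ring⟩

theorem Qc_inv {g : Fˣ} {ℓ : ℕ} {i : ℤ} {u : Fˣ} (hu : Qc g ℓ i u) : Qc g ℓ (-i) u⁻¹ := by
  obtain ⟨m, rfl⟩ := hu
  exact ⟨-m, by rw [← zpow_neg]; congr 1; ring⟩

theorem Qc_congr {g : Fˣ} {ℓ : ℕ} {i j : ℤ} {u : Fˣ} (h : (ℓ : ℤ) ∣ j - i)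
    (hu : Qc g ℓ i u) : Qc g ℓ j u := by
  obtain ⟨d, hd⟩ := h; obtain ⟨m, rfl⟩ := hu
  exact ⟨m - d, by congr 1; linarith⟩

theorem Qc_dvd {g : Fˣ} {ℓ k : ℕ} (ho : orderOf g = ℓ * k) {i j : ℤ} {u : Fˣ}
    (hi : Qc g ℓ i u) (hj : Qc g ℓ j u) : (ℓ : ℤ) ∣ i - j := by
  obtain ⟨m, rfl⟩ := hi; obtain ⟨m', h⟩ := hj
  have h2 := zpow_eq_zpow_iff_modEq.mp h
  have h3 : ((ℓ * k : ℕ) : ℤ) ∣ (j + (ℓ : ℤ) * m') - (i + (ℓ : ℤ) * m) := by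
    rw [← ho]; exact Int.ModEq.dvd h2
  obtain ⟨c, hc⟩ := h3
  refine ⟨-(k * c) + (m' - m), ?_⟩
  push_cast at hc ⊢
  linarith

theorem Qc_exists {g : Fˣ} {ℓ : ℕ} (hg : ∀ x : Fˣ, x ∈ Subgroup.zpowers g) (hl0 : 0 < ℓ)
    (u : Fˣ) : ∃ w : ℕ, w < ℓ ∧ Qc g ℓ (w : ℤ) u := by
  obtain ⟨m, hm⟩ := Subgroup.mem_zpowers_iff.mp (hg u)
  have hl0' : (0 : ℤ) < ℓ := by exact_mod_cast hl0
  have h1 : 0 ≤ m % ℓ := Int.emod_nonneg _ hl0'.ne'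
  have h2 : m % ℓ < ℓ := Int.emod_lt_of_pos _ hl0'
  refine ⟨(m % ℓ).toNat, by omega, ⟨m / ℓ, ?_⟩⟩
  rw [← hm]
  congr 1
  have h3 := Int.mul_ediv_add_emod m ℓ
  have h4 : ((m % ℓ).toNat : ℤ) = m % ℓ := Int.toNat_of_nonneg h1
  linarith

theorem Qc_mul_pow {g : Fˣ} {ℓ : ℕ} (hg : ∀ x : Fˣ, x ∈ Subgroup.zpowers g) {i : ℤ} {v : Fˣ}
    (hv : Qc g ℓ i v) (z : Fˣ) : Qc g ℓ i (v * z ^ ℓ) := by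
  obtain ⟨m, rfl⟩ := hv
  obtain ⟨m', hm'⟩ := Subgroup.mem_zpowers_iff.mp (hg z)
  refine ⟨m + m', ?_⟩
  rw [← hm', ← zpow_natCast (g ^ m') ℓ, ← zpow_mul, ← zpow_add]
  congr 1; ring

theorem Qc_div {g : Fˣ} {ℓ : ℕ} {i : ℤ} {u v : Fˣ} (hu : Qc g ℓ i u) (hv : Qc g ℓ i v) :
    ∃ z : Fˣ, u = v * z ^ ℓ := by
  obtain ⟨m, rfl⟩ := hu; obtain ⟨m', rfl⟩ := hv
  refine ⟨g ^ (m - m'), ?_⟩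
  rw [← zpow_natCast (g ^ (m - m')) ℓ, ← zpow_mul, ← zpow_add]
  congr 1; ring

theorem Qc_one {g : Fˣ} {ℓ : ℕ} : Qc g ℓ 0 1 :=
  ⟨0, by simp⟩

theorem Qc_zero_pow {g : Fˣ} {ℓ : ℕ} {u : Fˣ} (hu : Qc g ℓ 0 u) : ∃ z : Fˣ, u = z ^ ℓ := by
  obtain ⟨m, rfl⟩ := hu
  refine ⟨g ^ m, ?_⟩
  rw [← zpow_natCast (g ^ m) ℓ, ← zpow_mul]
  congr 1; ring

theorem Pc_iff {g : Fˣ} {ℓ : ℕ} (hg : ∀ x : Fˣ, x ∈ Subgroup.zpowers g) {j : ℤ} {x : F} :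
    Pc g ℓ j x ↔ ∃ u : Fˣ, x = (u : F) ∧ Qc g ℓ j u := by
  constructor
  · rintro ⟨z, rfl⟩
    obtain ⟨m, hm⟩ := Subgroup.mem_zpowers_iff.mp (hg z)
    refine ⟨g ^ j * z ^ ℓ, rfl, ⟨m, ?_⟩⟩
    rw [← hm, ← zpow_natCast (g ^ m) ℓ, ← zpow_mul, ← zpow_add]
    congr 1; ring
  · rintro ⟨u, rfl, m, rfl⟩
    refine ⟨g ^ m, ?_⟩
    have : (g : Fˣ) ^ (j + (ℓ : ℤ) * m) = g ^ j * (g ^ m) ^ ℓ := by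
      rw [← zpow_natCast (g ^ m) ℓ, ← zpow_mul, ← zpow_add]
      congr 1; ring
    rw [this]

theorem Qc_neg_one {g : Fˣ} {ℓ k : ℕ} (ho : orderOf g = ℓ * k) (h2 : 2 ∣ ℓ) (hl0 : 0 < ℓ)
    (hkodd : Odd k) : Qc g ℓ ((ℓ / 2 : ℕ) : ℤ) (-1 : Fˣ) := by
  obtain ⟨j, hj⟩ := hkodd
  obtain ⟨L, hL⟩ := h2
  have hL0 : 0 < L := by omega
  have hk0 : 0 < k := by omega
  have hhalf : ℓ / 2 = L := by omega
  have hpos : 0 < L * k := Nat.mul_pos hL0 hk0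
  have he : L * k = L + ℓ * j := by rw [hj, hL]; ring
  have h2e : (L * k) * 2 = ℓ * k := by rw [hL]; ring
  have hge : (g ^ (L * k)) ^ 2 = 1 := by
    rw [← pow_mul, h2e, ← ho, pow_orderOf_eq_one]
  have hne : g ^ (L * k) ≠ 1 := by
    intro h
    have hdvd := orderOf_dvd_of_pow_eq_one h
    rw [ho] at hdvd
    have hle : ℓ * k ≤ L * k := Nat.le_of_dvd hpos hdvd
    have h3 : ℓ * k = L * k + L * k := by rw [hL]; ring
    omega
  have hsq : ((g ^ (L * k) : Fˣ) : F) * ((g ^ (L * k) : Fˣ) : F) = 1 := by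
    rw [← Units.val_mul, ← sq, hge, Units.val_one]
  rcases mul_self_eq_one_iff.mp hsq with h | h
  · exact absurd (Units.val_eq_one.mp h) hne
  · have hu : (g ^ (L * k) : Fˣ) = -1 := by
      apply Units.ext
      rw [h]; simp
    refine ⟨(j : ℤ), ?_⟩
    rw [← hu, ← zpow_natCast g (L * k)]
    congr 1
    rw [hhalf]
    push_cast [he]
    ring

open Finset

/-- The set of elements of `F` counted by `cyc g ℓ w j`. -/
noncomputable def colS (g : Fˣ) (ℓ w : ℕ) (j : ℤ) : Finset F :=
  @Finset.filter _ (fun x => Pc g ℓ (w : ℤ) (x - 1) ∧ Pc g ℓ j x)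
    (Classical.decPred _) Finset.univ

theorem mem_colS {g : Fˣ} {ℓ w : ℕ} {j : ℤ} {x : F} :
    x ∈ colS g ℓ w j ↔ Pc g ℓ (w : ℤ) (x - 1) ∧ Pc g ℓ j x := by
  simp [colS]

theorem cyc_eq_s15 (g : Fˣ) (ℓ w : ℕ) (j : ℤ) : cyc g ℓ (w : ℤ) j = (colS g ℓ w j).card := by
  classical
  rw [cyc, Nat.card_eq_fintype_card, Fintype.card_subtype]
  congr 1
  ext x
  simp only [Finset.mem_filter, Finset.mem_univ, true_and, mem_colS, Pc]
  constructor
  · rintro ⟨⟨y, hy⟩, h2⟩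
    exact ⟨⟨y, by rw [hy]; ring⟩, h2⟩
  · rintro ⟨⟨y, hy⟩, h2⟩
    exact ⟨⟨y, by rw [← hy]; ring⟩, h2⟩

/-- The set of pairs counted by `∑ w < ℓ, (cyc w j)^2`. -/
noncomputable def Tp (g : Fˣ) (ℓ : ℕ) (j : ℤ) : Finset (F × F) :=
  @Finset.biUnion _ _ (Classical.decEq _) (Finset.range ℓ)
    (fun w => colS g ℓ w j ×ˢ colS g ℓ w j)

theorem colS_card_sum {g : Fˣ} {ℓ k : ℕ} (hg : ∀ x : Fˣ, x ∈ Subgroup.zpowers g)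
    (ho : orderOf g = ℓ * k) (j : ℤ) :
    ∑ w ∈ Finset.range ℓ, (colS g ℓ w j).card ^ 2 = (Tp g ℓ j).card := by
  classical
  have hdisj : ∀ a ∈ Finset.range ℓ, ∀ b ∈ Finset.range ℓ, a ≠ b →
      Disjoint (colS g ℓ a j ×ˢ colS g ℓ a j) (colS g ℓ b j ×ˢ colS g ℓ b j) := by
    intro a ha b hb hab
    rw [Finset.disjoint_left]
    intro p hp hp'
    rw [Finset.mem_product] at hp hp'
    obtain ⟨hp1, _⟩ := hp
    obtain ⟨hp1', _⟩ := hp'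
    obtain ⟨hPa, _⟩ := mem_colS.mp hp1
    obtain ⟨hPb, _⟩ := mem_colS.mp hp1'
    obtain ⟨u, hu, hQa⟩ := (Pc_iff hg).mp hPa
    obtain ⟨u', hu', hQb⟩ := (Pc_iff hg).mp hPb
    have huu : u = u' := Units.ext (by rw [← hu, ← hu'])
    subst huu
    have hdvd : (ℓ : ℤ) ∣ (a : ℤ) - b := Qc_dvd ho hQa hQb
    rw [Finset.mem_range] at ha hb
    have : (a : ℤ) - b = 0 := by
      apply Int.eq_zero_of_abs_lt_dvd hdvd
      rw [abs_lt]
      constructor <;> push_cast <;> omega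
    omega
  rw [Tp, @Finset.card_biUnion _ _ (Finset.range ℓ) (Classical.decEq _)
    (fun w => colS g ℓ w j ×ˢ colS g ℓ w j) (fun a ha b hb hab => hdisj a ha b hb hab)]
  apply Finset.sum_congr rfl
  intro w _
  rw [Finset.card_product, sq]

theorem mem_Tp {g : Fˣ} {ℓ k : ℕ} (hg : ∀ x : Fˣ, x ∈ Subgroup.zpowers g)
    (ho : orderOf g = ℓ * k) (hl0 : 0 < ℓ) {j : ℤ} {p : F × F} :
    p ∈ Tp g ℓ j ↔ Pc g ℓ j p.1 ∧ Pc g ℓ j p.2 ∧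
      ∃ u v : Fˣ, p.1 - 1 = (u : F) ∧ p.2 - 1 = (v : F) ∧ ∃ z : Fˣ, u = v * z ^ ℓ := by
  classical
  constructor
  · intro hp
    simp only [Tp, Finset.mem_biUnion, Finset.mem_range, Finset.mem_product] at hp
    obtain ⟨w, hw, hp1, hp2⟩ := hp
    obtain ⟨hPa, hja⟩ := mem_colS.mp hp1
    obtain ⟨hPb, hjb⟩ := mem_colS.mp hp2
    obtain ⟨u, hu, hQa⟩ := (Pc_iff hg).mp hPa
    obtain ⟨v, hv, hQb⟩ := (Pc_iff hg).mp hPb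
    exact ⟨hja, hjb, u, v, hu, hv, Qc_div hQa hQb⟩
  · rintro ⟨h1, h2, u, v, hu, hv, z, hz⟩
    obtain ⟨w, hw, hQv⟩ := Qc_exists hg hl0 v
    have hQu : Qc g ℓ (w : ℤ) u := by rw [hz]; exact Qc_mul_pow hg hQv z
    simp only [Tp, Finset.mem_biUnion, Finset.mem_range, Finset.mem_product]
    exact ⟨w, hw, mem_colS.mpr ⟨(Pc_iff hg).mpr ⟨u, hu, hQu⟩, h1⟩,
      mem_colS.mpr ⟨(Pc_iff hg).mpr ⟨v, hv, hQv⟩, h2⟩⟩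

theorem card_Cx [Fintype Fˣ] {g : Fˣ} {ℓ k : ℕ}
    [DecidablePred fun u : Fˣ => Qc g ℓ ((ℓ / 2 : ℕ) : ℤ) u]
    (ho : orderOf g = ℓ * k) (hl0 : 0 < ℓ) (hk0 : 0 < k) :
    (Finset.univ.filter (fun u : Fˣ => Qc g ℓ ((ℓ / 2 : ℕ) : ℤ) u)).card = k := by
  have hl0' : (0 : ℤ) < ℓ := by exact_mod_cast hl0
  have hk0' : (0 : ℤ) < k := by exact_mod_cast hk0
  rw [← Finset.card_range k]
  refine (Finset.card_bij
    (fun (m : ℕ) (_ : m ∈ Finset.range k) => g ^ (((ℓ / 2 : ℕ) : ℤ) + (ℓ : ℤ) * m))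
    ?_ ?_ ?_).symm
  · intro m _
    exact Finset.mem_filter.mpr ⟨Finset.mem_univ _, ⟨(m : ℤ), rfl⟩⟩
  · intro a ha b hb hab
    rw [Finset.mem_range] at ha hb
    have h2 := zpow_eq_zpow_iff_modEq.mp hab
    rw [ho] at h2
    have h3 : ((ℓ * k : ℕ) : ℤ) ∣ ((ℓ : ℤ) * b - (ℓ : ℤ) * a) := by
      have := Int.ModEq.dvd h2
      convert this using 1
      push_cast
      ring
    obtain ⟨c, hc⟩ := h3
    have h4 : (b : ℤ) - a = k * c := by
      apply mul_left_cancel₀ hl0'.ne'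
      push_cast at hc ⊢
      linarith
    have h5 : (b : ℤ) - a = 0 := by
      apply Int.eq_zero_of_abs_lt_dvd ⟨c, h4⟩
      rw [abs_lt]
      constructor <;> push_cast <;> omega
    omega
  · intro u hu
    obtain ⟨m, hm⟩ := (Finset.mem_filter.mp hu).2
    have h1 : 0 ≤ m % k := Int.emod_nonneg _ hk0'.ne'
    have h2 : m % k < k := Int.emod_lt_of_pos _ hk0'
    refine ⟨(m % k).toNat, Finset.mem_range.mpr (by omega), ?_⟩
    rw [hm]
    rw [zpow_eq_zpow_iff_modEq, ho]
    have h3 := Int.mul_ediv_add_emod m k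
    have h4 : (((m % k).toNat : ℕ) : ℤ) = m % k := Int.toNat_of_nonneg h1
    rw [Int.modEq_iff_dvd]
    refine ⟨m / k, ?_⟩
    rw [h4]
    push_cast
    linear_combination (-(ℓ : ℤ)) * h3


theorem Tp_card [Fintype Fˣ] {g : Fˣ} {ℓ k : ℕ} (hg : ∀ x : Fˣ, x ∈ Subgroup.zpowers g)
    (ho : orderOf g = ℓ * k) (h2 : 2 ∣ ℓ) (hl0 : 0 < ℓ) (hkodd : Odd k) :
    (Tp g ℓ ((ℓ / 2 : ℕ) : ℤ)).card = k + (Tp g ℓ 0).card := by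
  classical
  have hk0 : 0 < k := hkodd.pos
  set q' : ℤ := ((ℓ / 2 : ℕ) : ℤ) with hq'def
  have hq2 : q' + q' = (ℓ : ℤ) := by
    rw [hq'def, ← Nat.cast_add]
    norm_cast
    omega
  have hqpos : 0 < q' := by rw [hq'def]; exact_mod_cast Nat.pos_of_ne_zero (by omega)
  have hndvd : ¬ (ℓ : ℤ) ∣ q' := by
    intro hdvd
    have h0 : q' = 0 := by
      apply Int.eq_zero_of_abs_lt_dvd hdvd
      rw [abs_of_nonneg hqpos.le]
      omega
    omega
  have hQneg : Qc g ℓ q' (-1 : Fˣ) := Qc_neg_one ho h2 hl0 hkodd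
  -- basic consequences of membership
  have hP1 : ∀ x : F, Pc g ℓ q' x → x ≠ 1 := by
    intro x hx hx1
    obtain ⟨u, hu, hQ⟩ := (Pc_iff hg).mp hx
    have hu1 : u = 1 := Units.ext (by rw [← hu, hx1, Units.val_one])
    subst hu1
    have := Qc_dvd ho hQ (Qc_one (g := g) (ℓ := ℓ))
    rw [sub_zero] at this
    exact hndvd this
  have hP0 : ∀ (j : ℤ) (x : F), Pc g ℓ j x → x ≠ 0 := by
    rintro j x ⟨z, rfl⟩
    exact Units.ne_zero _
  -- the bad set
  set Cx : Finset Fˣ := Finset.univ.filter (fun u : Fˣ => Qc g ℓ q' u) with hCxdef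
  set Bad : Finset (F × F) := Cx.image (fun u : Fˣ => (((u : F), ((u⁻¹ : Fˣ) : F)) : F × F))
    with hBaddef
  have hinj : Function.Injective (fun u : Fˣ => (((u : F), ((u⁻¹ : Fˣ) : F)) : F × F)) := by
    intro a b hab
    exact Units.ext (congrArg Prod.fst hab)
  have hBadcard : Bad.card = k := by
    rw [hBaddef, Finset.card_image_of_injective _ hinj, hCxdef]
    exact card_Cx ho hl0 hk0
  have hBadsub : Bad ⊆ Tp g ℓ q' := by
    intro p hp
    rw [hBaddef, Finset.mem_image] at hp
    obtain ⟨u, hu, rfl⟩ := hp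
    rw [hCxdef, Finset.mem_filter] at hu
    have hQu := hu.2
    have hPu : Pc g ℓ q' ((u : F)) := (Pc_iff hg).mpr ⟨u, rfl, hQu⟩
    have hQinv : Qc g ℓ q' u⁻¹ :=
      Qc_congr ⟨1, by linarith⟩ (Qc_inv hQu)
    have hPuinv : Pc g ℓ q' (((u⁻¹ : Fˣ) : F)) := (Pc_iff hg).mpr ⟨u⁻¹, rfl, hQinv⟩
    rw [mem_Tp hg ho hl0]
    refine ⟨hPu, hPuinv, ?_⟩
    have hu1 : (u : F) ≠ 1 := hP1 _ hPu
    have hui1 : ((u⁻¹ : Fˣ) : F) ≠ 1 := hP1 _ hPuinv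
    have hQnu : Qc g ℓ 0 (-u) := by
      have hmul := Qc_mul hQneg hQu
      rw [neg_one_mul] at hmul
      exact Qc_congr ⟨-1, by linarith⟩ hmul
    obtain ⟨z, hz⟩ := Qc_zero_pow hQnu
    refine ⟨Units.mk0 ((u : F) - 1) (sub_ne_zero.mpr hu1),
      Units.mk0 (((u⁻¹ : Fˣ) : F) - 1) (sub_ne_zero.mpr hui1), by simp, by simp, z, ?_⟩
    apply Units.ext
    rw [Units.val_mul, Units.val_mk0, Units.val_mk0, Units.val_pow_eq_pow_val]
    have hzF : -(u : F) = (z : F) ^ ℓ := by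
      have := congrArg (Units.val) hz
      rw [Units.val_neg, Units.val_pow_eq_pow_val] at this
      exact this
    rw [Units.val_inv_eq_inv_val, ← hzF]
    have hu0 : (u : F) ≠ 0 := Units.ne_zero u
    field_simp
    ring
  have hBadIff : ∀ p ∈ Tp g ℓ q', (p ∈ Bad ↔ p.1 * p.2 = 1) := by
    intro p hp
    constructor
    · intro hb
      rw [hBaddef, Finset.mem_image] at hb
      obtain ⟨u, _, rfl⟩ := hb
      rw [← Units.val_mul]
      simp
    · intro hmul
      rw [mem_Tp hg ho hl0] at hp
      obtain ⟨hPa, hPb, _⟩ := hp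
      obtain ⟨ua, hua, hQa⟩ := (Pc_iff hg).mp hPa
      have hb : ((ua⁻¹ : Fˣ) : F) = p.2 := by
        rw [Units.val_inv_eq_inv_val]
        apply inv_eq_of_mul_eq_one_right
        rw [← hua]; exact hmul
      rw [hBaddef, Finset.mem_image]
      refine ⟨ua, by rw [hCxdef, Finset.mem_filter]; exact ⟨Finset.mem_univ _, hQa⟩, ?_⟩
      exact Prod.ext hua.symm hb
  -- basic nonzero facts for members
  have hfacts : ∀ (j : ℤ), ∀ p ∈ Tp g ℓ j,
      p.1 ≠ 0 ∧ p.2 ≠ 0 ∧ p.1 - 1 ≠ 0 ∧ p.2 - 1 ≠ 0 := by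
    intro j p hp
    rw [mem_Tp hg ho hl0] at hp
    obtain ⟨hPa, hPb, u, v, hu, hv, -⟩ := hp
    refine ⟨hP0 _ _ hPa, hP0 _ _ hPb, by rw [hu]; exact Units.ne_zero u,
      by rw [hv]; exact Units.ne_zero v⟩
  -- uv ≠ 1 for members of Tp 0
  have hT0ne1 : ∀ p ∈ Tp g ℓ 0, p.1 * p.2 ≠ 1 := by
    intro p hp hmul
    obtain ⟨ha0, hb0, ha1, hb1⟩ := hfacts 0 p hp
    rw [mem_Tp hg ho hl0] at hp
    obtain ⟨hPa, hPb, u, v, hu, hv, z, hz⟩ := hp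
    obtain ⟨ua, hua, hQa⟩ := (Pc_iff hg).mp hPa
    have hzF : p.1 - 1 = (p.2 - 1) * (z : F) ^ ℓ := by
      rw [hu, hv, hz, Units.val_mul, Units.val_pow_eq_pow_val]
    -- from p.2 = p.1⁻¹ deduce z^ℓ = -p.1
    have hzval : (z : F) ^ ℓ = -p.1 := by
      have hb : p.2 = p.1⁻¹ := (inv_eq_of_mul_eq_one_right hmul).symm
      rw [hb] at hzF
      have h5 : (p.1 - 1) * p.1 = (1 - p.1) * (z : F) ^ ℓ := by
        rw [hzF]
        field_simp <;> ring
      have h6 : (p.1 - 1) * p.1 = (p.1 - 1) * (-(z : F) ^ ℓ) := by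
        rw [h5]; ring
      have h7 := mul_left_cancel₀ ha1 h6
      rw [h7]; ring
    have hwz : ((-1 : Fˣ) * ua) = z ^ ℓ := by
      apply Units.ext
      rw [Units.val_mul, Units.val_pow_eq_pow_val, Units.val_neg, Units.val_one, hzval, ← hua]
      ring
    have hQw1 : Qc g ℓ (q' + 0) ((-1 : Fˣ) * ua) := Qc_mul hQneg hQa
    have hQw2 : Qc g ℓ 0 ((-1 : Fˣ) * ua) := by
      rw [hwz]
      have := Qc_mul_pow hg (Qc_one (g := g) (ℓ := ℓ)) z
      rwa [one_mul] at this
    have := Qc_dvd ho hQw1 hQw2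
    rw [add_zero, sub_zero] at this
    exact hndvd this
  -- ab ≠ 1 for members of Tp q' \ Bad
  have hTqne1 : ∀ p ∈ Tp g ℓ q' \ Bad, p.1 * p.2 ≠ 1 := by
    intro p hp hmul
    rw [Finset.mem_sdiff] at hp
    exact hp.2 ((hBadIff p hp.1).mpr hmul)
  -- the bijection map
  set φ : F × F → F × F :=
    fun p => (-p.2 * (p.1 - 1) / (p.2 - 1), -p.1 * (p.2 - 1) / (p.1 - 1)) with hφdef
  -- algebraic identities
  have halg1 : ∀ a b : F, b - 1 ≠ 0 → -b * (a - 1) / (b - 1) - 1 = (1 - a * b) / (b - 1) := by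
    intro a b hb1
    field_simp
    ring
  have halg5 : ∀ a b : F, a - 1 ≠ 0 → b - 1 ≠ 0 →
      (-b * (a - 1) / (b - 1)) * (-a * (b - 1) / (a - 1)) = a * b := by
    intro a b ha1 hb1
    field_simp
  -- the generic membership transfer
  have hmap : ∀ (j j' : ℤ), (ℓ : ℤ) ∣ j' - (q' + j) → ∀ p ∈ Tp g ℓ j, p.1 * p.2 ≠ 1 →
      φ p ∈ Tp g ℓ j' := by
    intro j j' hjj p hp hab
    obtain ⟨ha0, hb0, ha1, hb1⟩ := hfacts j p hp
    rw [mem_Tp hg ho hl0] at hp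
    obtain ⟨hPa, hPb, u, v, hu, hv, z, hz⟩ := hp
    obtain ⟨ua, hua, hQa⟩ := (Pc_iff hg).mp hPa
    obtain ⟨ub, hub, hQb⟩ := (Pc_iff hg).mp hPb
    have hzF : p.1 - 1 = (p.2 - 1) * (z : F) ^ ℓ := by
      rw [hu, hv, hz, Units.val_mul, Units.val_pow_eq_pow_val]
    have hone : (1 : F) - p.1 * p.2 ≠ 0 := sub_ne_zero.mpr (Ne.symm hab)
    have he1 : (φ p).1 - 1 = (1 - p.1 * p.2) / (p.2 - 1) := by
      rw [hφdef]; exact halg1 p.1 p.2 hb1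
    have he2 : (φ p).2 - 1 = (1 - p.1 * p.2) / (p.1 - 1) := by
      rw [hφdef]
      have := halg1 p.2 p.1 ha1
      rw [mul_comm p.2 p.1] at this
      exact this
    -- first component is a unit in class j'
    have hwA : ((-1 : Fˣ) * ub * u * v⁻¹) = ((-1 : Fˣ) * ub) * z ^ ℓ := by
      apply Units.ext
      simp only [Units.val_mul, Units.val_neg, Units.val_one, Units.val_inv_eq_inv_val,
        Units.val_pow_eq_pow_val]
      have hv0 : (v : F) ≠ 0 := Units.ne_zero v
      have huval : (u : F) = (v : F) * (z : F) ^ ℓ := by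
        rw [hz, Units.val_mul, Units.val_pow_eq_pow_val]
      field_simp [huval]
      rw [huval]
    have hQA : Qc g ℓ j' ((-1 : Fˣ) * ub * u * v⁻¹) := by
      rw [hwA]
      exact Qc_congr (by rwa [hq'def] at hjj) (Qc_mul_pow hg (Qc_mul hQneg hQb) z)
    have hPA : Pc g ℓ j' ((φ p).1) := by
      refine (Pc_iff hg).mpr ⟨(-1 : Fˣ) * ub * u * v⁻¹, ?_, hQA⟩
      rw [hφdef]
      simp only [Units.val_mul, Units.val_neg, Units.val_one, Units.val_inv_eq_inv_val]
      rw [← hu, ← hv, ← hub]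
      field_simp <;> ring
    -- second component is a unit in class j'
    have hwB : ((-1 : Fˣ) * ua * v * u⁻¹) = ((-1 : Fˣ) * ua) * (z⁻¹) ^ ℓ := by
      apply Units.ext
      simp only [Units.val_mul, Units.val_neg, Units.val_one, Units.val_inv_eq_inv_val,
        Units.val_pow_eq_pow_val]
      have hu0 : (u : F) ≠ 0 := Units.ne_zero u
      have hz0 : (z : F) ≠ 0 := Units.ne_zero z
      have huval : (u : F) = (v : F) * (z : F) ^ ℓ := by
        rw [hz, Units.val_mul, Units.val_pow_eq_pow_val]
      field_simp [huval]
      rw [huval, one_div, inv_pow, mul_assoc, mul_inv_cancel₀ (pow_ne_zero _ hz0), mul_one]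
    have hQB : Qc g ℓ j' ((-1 : Fˣ) * ua * v * u⁻¹) := by
      rw [hwB]
      exact Qc_congr (by rwa [hq'def] at hjj) (Qc_mul_pow hg (Qc_mul hQneg hQa) z⁻¹)
    have hPB : Pc g ℓ j' ((φ p).2) := by
      refine (Pc_iff hg).mpr ⟨(-1 : Fˣ) * ua * v * u⁻¹, ?_, hQB⟩
      rw [hφdef]
      simp only [Units.val_mul, Units.val_neg, Units.val_one, Units.val_inv_eq_inv_val]
      rw [← hu, ← hv, ← hua]
      field_simp <;> ring
    rw [mem_Tp hg ho hl0]
    refine ⟨hPA, hPB, Units.mk0 _ (he1 ▸ div_ne_zero hone hb1),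
      Units.mk0 _ (he2 ▸ div_ne_zero hone ha1), by rw [Units.val_mk0], by rw [Units.val_mk0], z, ?_⟩
    apply Units.ext
    rw [Units.val_mul, Units.val_mk0, Units.val_mk0, Units.val_pow_eq_pow_val, he1, he2]
    rw [div_mul_eq_mul_div, div_eq_div_iff hb1 ha1]
    rw [hzF]
    ring
  -- the involution identity
  have hinvol : ∀ p : F × F, p.1 ≠ 0 → p.2 ≠ 0 → p.1 - 1 ≠ 0 → p.2 - 1 ≠ 0 →
      p.1 * p.2 ≠ 1 → φ (φ p) = p := by
    rintro ⟨a, b⟩ ha0 hb0 ha1 hb1 hab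
    simp only at ha0 hb0 ha1 hb1 hab
    have hone : (1 : F) - a * b ≠ 0 := sub_ne_zero.mpr (Ne.symm hab)
    have h1 : -b * (a - 1) / (b - 1) - 1 = (1 - a * b) / (b - 1) := halg1 a b hb1
    have h2 : -a * (b - 1) / (a - 1) - 1 = (1 - a * b) / (a - 1) := by
      have := halg1 b a ha1
      rw [mul_comm b a] at this
      exact this
    rw [hφdef]
    simp only
    rw [h1, h2]
    have hd1 : (1 - a * b) / (b - 1) ≠ 0 := div_ne_zero hone hb1
    have hd2 : (1 - a * b) / (a - 1) ≠ 0 := div_ne_zero hone ha1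
    have hx : -(-a * (b - 1) / (a - 1)) * ((1 - a * b) / (b - 1)) / ((1 - a * b) / (a - 1))
        = a := by
      field_simp <;> ring
    have hy : -(-b * (a - 1) / (b - 1)) * ((1 - a * b) / (a - 1)) / ((1 - a * b) / (b - 1))
        = b := by
      field_simp
      rw [mul_comm b a, div_self hone]
    exact Prod.ext hx hy
  -- assemble the bijection
  have hdvd1 : (ℓ : ℤ) ∣ 0 - (q' + q') := ⟨-1, by linarith⟩
  have hdvd2 : (ℓ : ℤ) ∣ q' - (q' + 0) := by simp
  have hcard : (Tp g ℓ q' \ Bad).card = (Tp g ℓ 0).card := by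
    apply Finset.card_nbij' φ φ
    · intro p hp
      have hpT : p ∈ Tp g ℓ q' := (Finset.mem_sdiff.mp hp).1
      exact hmap q' 0 hdvd1 p hpT (hTqne1 p hp)
    · intro p hp
      rw [Finset.mem_coe, Finset.mem_sdiff]
      have hne1 := hT0ne1 p hp
      have hmem := hmap 0 q' hdvd2 p hp hne1
      refine ⟨hmem, fun hbad => ?_⟩
      have := (hBadIff _ hmem).mp hbad
      obtain ⟨ha0, hb0, ha1, hb1⟩ := hfacts 0 p hp
      rw [hφdef] at this
      simp only at this
      rw [halg5 p.1 p.2 ha1 hb1] at this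
      exact hne1 this
    · intro p hp
      obtain ⟨ha0, hb0, ha1, hb1⟩ := hfacts q' p (Finset.mem_sdiff.mp hp).1
      exact hinvol p ha0 hb0 ha1 hb1 (hTqne1 p hp)
    · intro p hp
      obtain ⟨ha0, hb0, ha1, hb1⟩ := hfacts 0 p hp
      exact hinvol p ha0 hb0 ha1 hb1 (hT0ne1 p hp)
  have hsplit := Finset.card_sdiff_add_card_eq_card hBadsub
  omega

end CycAux

theorem cyc_halfcolumn_sq_sum {F : Type*} [Field F] [Fintype F] (g : Fˣ) (ℓ : ℕ)
    (hg : ∀ x : Fˣ, x ∈ Subgroup.zpowers g)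
    (hodd : Odd (Fintype.card F)) (hℓ : ℓ ∣ Fintype.card F - 1)
    (k : ℕ) (hk : k = (Fintype.card F - 1) / ℓ) (hkodd : Odd k) :
    ∑ w ∈ Finset.range ℓ, (cyc g ℓ (w : ℤ) ((ℓ / 2 : ℕ) : ℤ)) ^ 2 =
      k + ∑ w ∈ Finset.range ℓ, (cyc g ℓ (w : ℤ) 0) ^ 2 := by
  classical
  have hn2 : 1 < Fintype.card F := Fintype.one_lt_card
  have hl0 : 0 < ℓ := by
    rcases Nat.eq_zero_or_pos ℓ with h | h
    · subst h; rw [zero_dvd_iff] at hℓ; omega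
    · exact h
  have hlk : ℓ * k = Fintype.card F - 1 := by rw [hk]; exact Nat.mul_div_cancel' hℓ
  have hk0 : 0 < k := hkodd.pos
  have h2 : 2 ∣ ℓ := by
    have he : Even (Fintype.card F - 1) := Nat.Odd.sub_odd hodd odd_one
    rw [← hlk, Nat.even_mul] at he
    rcases he with h | h
    · exact h.two_dvd
    · exact absurd h (Nat.not_even_iff_odd.mpr hkodd)
  have ho : orderOf g = ℓ * k := by
    rw [orderOf_eq_card_of_forall_mem_zpowers hg, Nat.card_eq_fintype_card,
      Fintype.card_units, hlk]
  have hL : ∑ w ∈ Finset.range ℓ, (cyc g ℓ (w : ℤ) ((ℓ / 2 : ℕ) : ℤ)) ^ 2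
      = (CycAux.Tp g ℓ ((ℓ / 2 : ℕ) : ℤ)).card := by
    rw [Finset.sum_congr rfl (fun w _ => by rw [CycAux.cyc_eq_s15])]
    exact CycAux.colS_card_sum hg ho _
  have hR : ∑ w ∈ Finset.range ℓ, (cyc g ℓ (w : ℤ) 0) ^ 2 = (CycAux.Tp g ℓ 0).card := by
    rw [Finset.sum_congr rfl (fun w _ => by rw [CycAux.cyc_eq_s15])]
    exact CycAux.colS_card_sum hg ho _
  rw [hL, hR]
  exact CycAux.Tp_card hg ho h2 hl0 hkodd
end
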